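/- arXiv:1206.2448 — 11 statements merged into one kernel-verified Lean document; each statement's English description precedes it below -/
import Mathlib

section
/- Let the network have L links with capacities c_l > 0 and R flows with 0-1 routing matrix A = [a_{lr}] (a_{lr} = 1 iff flow r traverses link l; every flow traverses at least one link). Let each utility u_r : [0,∞) → ℝ be strictly increasing and concave. Let x* be an optimal solution of the NUM problem: maximize Σ_{r=1}^R u_r(x_r) subject to A x ≤ c, x ≥ 0. Define the strategy profile S* by s*_{lr} = a_{lr} · x*_r. Then S* is a pure Nash equilibrium of the capacity allocation game with uniform payoffs (all weights b_r = 1): for every link l and every vector s'_l with s'_{lr} ≥ 0, s'_{lr} = 0 whenever a_{lr} = 0, and Σ_r a_{lr} s'_{lr} ≤ c_l, the deviation payoff Σ_r a_{lr} u_r(min{s'_{lr} if a_{lr}=1, together with s*_{kr} over k ≠ l with a_{kr}=1}) is at most Σ_r a_{lr} u_r(x*_r). -/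
open Finset

/-- The minimum allocation for flow `r` over all links on its path. -/
noncomputable def linkMin {L R : ℕ} (a : Fin L → Fin R → Bool)
    (S : Fin L → Fin R → ℝ) (r : Fin R) : ℝ :=
  sInf {v : ℝ | ∃ k, a k r = true ∧ v = S k r}

/-- Feasibility of a single player's (link's) strategy. -/
def FeasibleStrat {L R : ℕ} (a : Fin L → Fin R → Bool) (c : Fin L → ℝ)
    (l : Fin L) (s : Fin R → ℝ) : Prop :=
  (∀ r, 0 ≤ s r) ∧ (∀ r, a l r = false → s r = 0) ∧
    (∑ r ∈ Finset.univ.filter (fun r => a l r = true), s r) ≤ c l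

/-- Feasibility of a full strategy profile. -/
def FeasibleProfile {L R : ℕ} (a : Fin L → Fin R → Bool) (c : Fin L → ℝ)
    (S : Fin L → Fin R → ℝ) : Prop :=
  ∀ l, FeasibleStrat a c l (S l)

/-- Payoff of player `l`: weighted utilities of minimum allocations of its flows. -/
noncomputable def payoff {L R : ℕ} (a : Fin L → Fin R → Bool)
    (b : Fin R → ℝ) (u : Fin R → ℝ → ℝ) (l : Fin L) (S : Fin L → Fin R → ℝ) : ℝ :=
  ∑ r ∈ Finset.univ.filter (fun r => a l r = true), b r * u r (linkMin a S r)

/-- Pure Nash equilibrium: no player can strictly improve by a unilateral feasible deviation. -/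
def NashEq {L R : ℕ} (a : Fin L → Fin R → Bool) (c : Fin L → ℝ)
    (b : Fin R → ℝ) (u : Fin R → ℝ → ℝ) (S : Fin L → Fin R → ℝ) : Prop :=
  ∀ l s', FeasibleStrat a c l s' →
    payoff a b u l (Function.update S l s') ≤ payoff a b u l S

/-- Social welfare of a profile. -/
noncomputable def welfare {L R : ℕ} (a : Fin L → Fin R → Bool)
    (u : Fin R → ℝ → ℝ) (S : Fin L → Fin R → ℝ) : ℝ :=
  ∑ r, u r (linkMin a S r)

/-- the NUM optimum, played by all links (each link allocates `x* r` to each of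
its flows), is a pure Nash equilibrium of the capacity allocation game with uniform payoffs. -/
theorem num_optimum_is_nash_uniform
    {L R : ℕ} (a : Fin L → Fin R → Bool) (c : Fin L → ℝ) (u : Fin R → ℝ → ℝ)
    (x : Fin R → ℝ)
    (hc : ∀ l, 0 < c l)
    (hflow : ∀ r : Fin R, ∃ l, a l r = true)
    (hmono : ∀ r, StrictMonoOn (u r) (Set.Ici 0))
    (hconc : ∀ r, ConcaveOn ℝ (Set.Ici 0) (u r))
    (hx0 : ∀ r, 0 ≤ x r)
    (hxc : ∀ l, (∑ r ∈ Finset.univ.filter (fun r => a l r = true), x r) ≤ c l)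
    (hopt : ∀ y : Fin R → ℝ, (∀ r, 0 ≤ y r) →
      (∀ l, (∑ r ∈ Finset.univ.filter (fun r => a l r = true), y r) ≤ c l) →
      (∑ r, u r (y r)) ≤ ∑ r, u r (x r)) :
    ∀ l : Fin L, ∀ s' : Fin R → ℝ, FeasibleStrat a c l s' →
      payoff a (fun _ => 1) u l
        (Function.update (fun k r => if a k r then x r else 0) l s') ≤
      ∑ r ∈ Finset.univ.filter (fun r => a l r = true), u r (x r) := by
  intro l s' hs'
  obtain ⟨hs0, hszero, hscap⟩ := hs'
  set S' : Fin L → Fin R → ℝ :=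
    Function.update (fun k r => if a k r then x r else 0) l s' with hS'
  have hS'val : ∀ k r, S' k r = if k = l then s' r else (if a k r then x r else 0) := by
    intro k r
    by_cases hk : k = l
    · subst hk; simp [hS']
    · simp [hS', Function.update_of_ne hk, hk]
  have hS'nonneg : ∀ k r, 0 ≤ S' k r := by
    intro k r
    rw [hS'val]
    split
    · exact hs0 r
    · split
      · exact hx0 r
      · exact le_refl 0
  set m : Fin R → ℝ := fun r => linkMin a S' r with hm
  have hbdd : ∀ r, BddBelow {v : ℝ | ∃ k, a k r = true ∧ v = S' k r} := by
    intro r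
    exact ⟨0, fun v ⟨k, _, hv⟩ => hv ▸ hS'nonneg k r⟩
  have hmem : ∀ r, a l r = true → s' r ∈ {v : ℝ | ∃ k, a k r = true ∧ v = S' k r} := by
    intro r hr
    exact ⟨l, hr, by rw [hS'val]; simp⟩
  have hm_le_s' : ∀ r, a l r = true → m r ≤ s' r := by
    intro r hr
    exact csInf_le (hbdd r) (hmem r hr)
  have hm_nonneg : ∀ r, a l r = true → 0 ≤ m r := by
    intro r hr
    exact le_csInf ⟨s' r, hmem r hr⟩ (fun v ⟨k, _, hv⟩ => hv ▸ hS'nonneg k r)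
  have hm_le_x : ∀ k r, k ≠ l → a k r = true → m r ≤ x r := by
    intro k r hk hr
    refine csInf_le (hbdd r) ⟨k, hr, ?_⟩
    rw [hS'val]
    simp [hk, hr]
  set y : Fin R → ℝ := fun r => if a l r = true then m r else x r with hy
  have hy0 : ∀ r, 0 ≤ y r := by
    intro r
    by_cases hr : a l r = true
    · simpa [hy, hr] using hm_nonneg r hr
    · simpa [hy, hr] using hx0 r
  have hycap : ∀ k, (∑ r ∈ Finset.univ.filter (fun r => a k r = true), y r) ≤ c k := by
    intro k
    by_cases hk : k = l
    · subst hk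
      refine le_trans (Finset.sum_le_sum ?_) hscap
      intro r hr
      simp only [Finset.mem_filter] at hr
      simp [hy, hr.2, hm_le_s' r hr.2]
    · refine le_trans (Finset.sum_le_sum ?_) (hxc k)
      intro r hr
      simp only [Finset.mem_filter] at hr
      by_cases hlr : a l r = true
      · simp [hy, hlr, hm_le_x k r hk hr.2]
      · simp [hy, hlr]
  have hkey := hopt y hy0 hycap
  have hsplit : ∀ z : Fin R → ℝ, (∑ r, z r) =
      (∑ r ∈ Finset.univ.filter (fun r => a l r = true), z r) +
      (∑ r ∈ Finset.univ.filter (fun r => ¬ (a l r = true)), z r) :=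
    fun z => (Finset.sum_filter_add_sum_filter_not Finset.univ _ z).symm
  rw [hsplit (fun r => u r (y r)), hsplit (fun r => u r (x r))] at hkey
  have heq : (∑ r ∈ Finset.univ.filter (fun r => ¬ (a l r = true)), u r (y r)) =
      (∑ r ∈ Finset.univ.filter (fun r => ¬ (a l r = true)), u r (x r)) := by
    refine Finset.sum_congr rfl ?_
    intro r hr
    simp only [Finset.mem_filter] at hr
    simp [hy, hr.2]
  rw [heq] at hkey
  have hmain : (∑ r ∈ Finset.univ.filter (fun r => a l r = true), u r (y r)) ≤
      (∑ r ∈ Finset.univ.filter (fun r => a l r = true), u r (x r)) :=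
    le_of_add_le_add_right hkey
  calc payoff a (fun _ => 1) u l S'
      = ∑ r ∈ Finset.univ.filter (fun r => a l r = true), u r (y r) := by
        refine Finset.sum_congr rfl ?_
        intro r hr
        simp only [Finset.mem_filter] at hr
        simp [hy, hr.2, hm]
    _ ≤ _ := hmain
end

section
/- Consider the capacity allocation game with uniform payoffs (all weights b_r = 1) and isoelastic utilities u_r(x) = w_r x^{1-γ}/(1-γ) with w_r > 0 and 0 < γ < 1, on a network with link capacities c_l > 0 and 0-1 routing matrix A where every flow traverses at least one link. Then there exists a pure Nash equilibrium S whose social welfare W(S) = Σ_r u_r(min_{l : a_{lr}=1} s_{lr}) equals the maximal value of social welfare over all feasible strategy profiles, and this maximal value equals the optimal value of the NUM problem maximize Σ_r u_r(x_r) subject to A x ≤ c, x ≥ 0. In particular, the Price of Stability (the ratio of the maximal social welfare over all profiles to the maximal social welfare over all pure Nash equilibria) equals 1. -/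
open Finset

lemma linkMin_set_finite {L R : ℕ} (a : Fin L → Fin R → Bool)
    (S : Fin L → Fin R → ℝ) (r : Fin R) :
    {v : ℝ | ∃ k, a k r = true ∧ v = S k r}.Finite := by
  apply (Set.finite_range (fun k => S k r)).subset
  rintro v ⟨k, _, rfl⟩; exact ⟨k, rfl⟩

lemma linkMin_le {L R : ℕ} (a : Fin L → Fin R → Bool)
    (S : Fin L → Fin R → ℝ) (r : Fin R) (l : Fin L) (hl : a l r = true) :
    linkMin a S r ≤ S l r :=
  csInf_le (linkMin_set_finite a S r).bddBelow ⟨l, hl, rfl⟩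

lemma linkMin_nonneg {L R : ℕ} (a : Fin L → Fin R → Bool)
    (S : Fin L → Fin R → ℝ) (r : Fin R) (hflow : ∃ l, a l r = true)
    (h : ∀ k, a k r = true → 0 ≤ S k r) : 0 ≤ linkMin a S r := by
  obtain ⟨l, hl⟩ := hflow
  refine le_csInf ⟨S l r, l, hl, rfl⟩ ?_
  rintro v ⟨k, hk, rfl⟩; exact h k hk

/-- with uniform payoffs and isoelastic utilities there is a pure Nash
equilibrium achieving the maximal social welfare over all feasible profiles, which also
equals the NUM optimum; in particular the Price of Stability is 1 (the best equilibrium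
welfare equals the best overall welfare). -/
theorem exists_welfare_optimal_nash_uniform
    {L R : ℕ} (a : Fin L → Fin R → Bool) (c : Fin L → ℝ) (w : Fin R → ℝ) (γ : ℝ)
    (u : Fin R → ℝ → ℝ)
    (hc : ∀ l, 0 < c l)
    (hflow : ∀ r : Fin R, ∃ l, a l r = true)
    (hw : ∀ r, 0 < w r) (hγ0 : 0 < γ) (hγ1 : γ < 1)
    (hu : ∀ r x, u r x = w r * x ^ (1 - γ) / (1 - γ)) :
    ∃ S : Fin L → Fin R → ℝ, FeasibleProfile a c S ∧ NashEq a c (fun _ => 1) u S ∧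
      IsGreatest {v | ∃ S', FeasibleProfile a c S' ∧ v = welfare a u S'} (welfare a u S) ∧
      IsGreatest {v | ∃ x : Fin R → ℝ, (∀ r, 0 ≤ x r) ∧
          (∀ l, (∑ r ∈ Finset.univ.filter (fun r => a l r = true), x r) ≤ c l) ∧
          v = ∑ r, u r (x r)} (welfare a u S) ∧
      IsGreatest {v | ∃ S', FeasibleProfile a c S' ∧ NashEq a c (fun _ => 1) u S' ∧
          v = welfare a u S'} (welfare a u S) := by
  classical
  -- the NUM feasible set
  set K : Set (Fin R → ℝ) := {x | (∀ r, 0 ≤ x r) ∧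
      ∀ l, (∑ r ∈ Finset.univ.filter (fun r => a l r = true), x r) ≤ c l} with hK
  set f : (Fin R → ℝ) → ℝ := fun x => ∑ r, u r (x r) with hf
  have hfexp : f = fun x => ∑ r, w r * (x r) ^ (1 - γ) / (1 - γ) := by
    funext x; exact Finset.sum_congr rfl fun r _ => hu r (x r)
  have hcont : Continuous f := by
    rw [hfexp]
    refine continuous_finset_sum _ fun r _ => ?_
    have h1 : Continuous fun t : ℝ => t ^ (1 - γ) := by
      refine continuous_iff_continuousAt.2 fun t => ?_
      exact Real.continuousAt_rpow_const t _ (Or.inr (by linarith))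
    exact ((continuous_const.mul (h1.comp (continuous_apply r))).div_const _)
  have hKne : K.Nonempty := by
    refine ⟨0, fun r => le_rfl, fun l => ?_⟩
    simp [le_of_lt (hc l)]
  have hKclosed : IsClosed K := by
    have h1 : IsClosed {x : Fin R → ℝ | ∀ r, 0 ≤ x r} := by
      have : {x : Fin R → ℝ | ∀ r, 0 ≤ x r} = ⋂ r, {x | 0 ≤ x r} := by ext; simp
      rw [this]
      exact isClosed_iInter fun r => isClosed_le continuous_const (continuous_apply r)
    have h2 : IsClosed {x : Fin R → ℝ |
        ∀ l, (∑ r ∈ Finset.univ.filter (fun r => a l r = true), x r) ≤ c l} := by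
      have : {x : Fin R → ℝ |
          ∀ l, (∑ r ∈ Finset.univ.filter (fun r => a l r = true), x r) ≤ c l}
          = ⋂ l, {x | (∑ r ∈ Finset.univ.filter (fun r => a l r = true), x r) ≤ c l} := by
        ext; simp
      rw [this]
      exact isClosed_iInter fun l =>
        isClosed_le (continuous_finset_sum _ fun r _ => continuous_apply r) continuous_const
    have : K = {x : Fin R → ℝ | ∀ r, 0 ≤ x r} ∩ _ := rfl
    exact h1.inter h2
  -- boundedness of K
  have hmemle : ∀ x ∈ K, ∀ r, x r ≤ c (hflow r).choose := by
    rintro x ⟨hx0, hxc⟩ r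
    refine le_trans ?_ (hxc (hflow r).choose)
    refine Finset.single_le_sum (fun i _ => hx0 i) ?_
    simp [(hflow r).choose_spec]
  have hKcomp : IsCompact K := by
    refine IsCompact.of_isClosed_subset (isCompact_Icc
      (a := (0 : Fin R → ℝ)) (b := fun r => c (hflow r).choose)) hKclosed ?_
    intro x hx
    refine ⟨fun r => hx.1 r, fun r => hmemle x hx r⟩
  obtain ⟨xs, hxsK, hmax'⟩ := hKcomp.exists_isMaxOn hKne hcont.continuousOn
  have hmax : ∀ x ∈ K, f x ≤ f xs := fun x hx => hmax' hx
  -- the candidate profile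
  set S : Fin L → Fin R → ℝ := fun l r => if a l r = true then xs r else 0 with hS
  have hmin : ∀ r, linkMin a S r = xs r := by
    intro r
    have hset : {v : ℝ | ∃ k, a k r = true ∧ v = S k r} = {xs r} := by
      ext v; constructor
      · rintro ⟨k, hk, rfl⟩; simp [hS, hk]
      · rintro rfl; obtain ⟨k, hk⟩ := hflow r; exact ⟨k, hk, by simp [hS, hk]⟩
    rw [linkMin, hset, csInf_singleton]
  have hwelS : welfare a u S = f xs := by
    rw [welfare]; exact Finset.sum_congr rfl fun r _ => by rw [hmin r]
  have hSfeas : FeasibleProfile a c S := by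
    intro l
    refine ⟨fun r => ?_, fun r hr => by simp [hS, hr], ?_⟩
    · by_cases h : a l r = true <;> simp [hS, h, hxsK.1 r]
    · calc (∑ r ∈ Finset.univ.filter (fun r => a l r = true), S l r)
          = ∑ r ∈ Finset.univ.filter (fun r => a l r = true), xs r := by
            refine Finset.sum_congr rfl fun r hr => ?_
            simp [hS, (Finset.mem_filter.1 hr).2]
        _ ≤ c l := hxsK.2 l
  -- any feasible profile's welfare is at most f xs
  have hub : ∀ S', FeasibleProfile a c S' → welfare a u S' ≤ f xs := by
    intro S' hS'
    have hxK : (fun r => linkMin a S' r) ∈ K := by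
      refine ⟨fun r => linkMin_nonneg a S' r (hflow r) (fun k _ => (hS' k).1 r), fun l => ?_⟩
      calc (∑ r ∈ Finset.univ.filter (fun r => a l r = true), linkMin a S' r)
          ≤ ∑ r ∈ Finset.univ.filter (fun r => a l r = true), S' l r :=
            Finset.sum_le_sum fun r hr =>
              linkMin_le a S' r l (Finset.mem_filter.1 hr).2
        _ ≤ c l := (hS' l).2.2
    exact hmax _ hxK
  -- Nash equilibrium
  have hNash : NashEq a c (fun _ => 1) u S := by
    intro l s' hs'
    obtain ⟨hs'0, hs'z, hs'c⟩ := hs'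
    set y : Fin R → ℝ := fun r =>
      if a l r = true then
        (if ∃ k, k ≠ l ∧ a k r = true then min (s' r) (xs r) else s' r)
      else xs r with hy
    have hyle_s : ∀ r, a l r = true → y r ≤ s' r := by
      intro r hr
      by_cases h : ∃ k, k ≠ l ∧ a k r = true <;> simp [hy, hr, h, min_le_left]
    have hyK : y ∈ K := by
      constructor
      · intro r
        by_cases hr : a l r = true
        · by_cases h : ∃ k, k ≠ l ∧ a k r = true <;>
            simp [hy, hr, h, le_min (hs'0 r) (hxsK.1 r), hs'0 r]
        · simp [hy, hr, hxsK.1 r]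
      · intro k
        by_cases hkl : k = l
        · subst hkl
          calc (∑ r ∈ Finset.univ.filter (fun r => a k r = true), y r)
              ≤ ∑ r ∈ Finset.univ.filter (fun r => a k r = true), s' r :=
                Finset.sum_le_sum fun r hr => hyle_s r (Finset.mem_filter.1 hr).2
            _ ≤ c k := hs'c
        · calc (∑ r ∈ Finset.univ.filter (fun r => a k r = true), y r)
              ≤ ∑ r ∈ Finset.univ.filter (fun r => a k r = true), xs r := by
                refine Finset.sum_le_sum fun r hr => ?_
                have hk : a k r = true := (Finset.mem_filter.1 hr).2
                by_cases hlr : a l r = true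
                · have hex : ∃ k', k' ≠ l ∧ a k' r = true := ⟨k, hkl, hk⟩
                  simp [hy, hlr, hex, min_le_right]
                · simp [hy, hlr]
            _ ≤ c k := hxsK.2 k
    have hfy : f y ≤ f xs := hmax _ hyK
    -- compute linkMin for the deviated profile
    have hmin' : ∀ r, a l r = true → linkMin a (Function.update S l s') r = y r := by
      intro r hr
      by_cases h : ∃ k, k ≠ l ∧ a k r = true
      · have hset : {v : ℝ | ∃ k, a k r = true ∧ v = Function.update S l s' k r}
            = {s' r, xs r} := by
          ext v; constructor
          · rintro ⟨k, hk, rfl⟩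
            by_cases hkl : k = l
            · subst hkl; simp [Function.update_self]
            · simp [Function.update_of_ne hkl, hS, hk]
          · rintro (rfl | rfl)
            · exact ⟨l, hr, by simp [Function.update_self]⟩
            · obtain ⟨k, hkl, hk⟩ := h
              exact ⟨k, hk, by simp [Function.update_of_ne hkl, hS, hk]⟩
        rw [linkMin, hset, csInf_pair]
        simp [hy, hr, h, min_def]
      · have hset : {v : ℝ | ∃ k, a k r = true ∧ v = Function.update S l s' k r}
            = {s' r} := by
          ext v; constructor
          · rintro ⟨k, hk, rfl⟩
            by_cases hkl : k = l
            · subst hkl; simp [Function.update_self]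
            · exact absurd ⟨k, hkl, hk⟩ h
          · rintro rfl; exact ⟨l, hr, by simp [Function.update_self]⟩
        rw [linkMin, hset, csInf_singleton]
        simp [hy, hr, h]
    -- payoffs
    have hpay1 : payoff a (fun _ => 1) u l (Function.update S l s')
        = ∑ r ∈ Finset.univ.filter (fun r => a l r = true), u r (y r) := by
      rw [payoff]
      refine Finset.sum_congr rfl fun r hr => ?_
      rw [hmin' r (Finset.mem_filter.1 hr).2, one_mul]
    have hpay2 : payoff a (fun _ => 1) u l S
        = ∑ r ∈ Finset.univ.filter (fun r => a l r = true), u r (xs r) := by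
      rw [payoff]
      refine Finset.sum_congr rfl fun r hr => ?_
      rw [hmin r, one_mul]
    rw [hpay1, hpay2]
    have hsplit1 : f y = (∑ r ∈ Finset.univ.filter (fun r => a l r = true), u r (y r))
        + ∑ r ∈ Finset.univ.filter (fun r => ¬ a l r = true), u r (y r) :=
      (Finset.sum_filter_add_sum_filter_not univ _ _).symm
    have hsplit2 : f xs = (∑ r ∈ Finset.univ.filter (fun r => a l r = true), u r (xs r))
        + ∑ r ∈ Finset.univ.filter (fun r => ¬ a l r = true), u r (xs r) :=
      (Finset.sum_filter_add_sum_filter_not univ _ _).symm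
    have heqnot : ∑ r ∈ Finset.univ.filter (fun r => ¬ a l r = true), u r (y r)
        = ∑ r ∈ Finset.univ.filter (fun r => ¬ a l r = true), u r (xs r) := by
      refine Finset.sum_congr rfl fun r hr => ?_
      have : ¬ a l r = true := (Finset.mem_filter.1 hr).2
      simp [hy, this]
    rw [hsplit1, hsplit2, heqnot] at hfy
    linarith
  refine ⟨S, hSfeas, hNash, ?_, ?_, ?_⟩
  · constructor
    · exact ⟨S, hSfeas, rfl⟩
    · rintro v ⟨S', hS', rfl⟩
      rw [hwelS]; exact hub S' hS'
  · constructor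
    · exact ⟨xs, hxsK.1, hxsK.2, hwelS⟩
    · rintro v ⟨x, hx0, hxc, rfl⟩
      rw [hwelS]; exact hmax x ⟨hx0, hxc⟩
  · constructor
    · exact ⟨S, hSfeas, hNash, rfl⟩
    · rintro v ⟨S', hS', _, rfl⟩
      rw [hwelS]; exact hub S' hS'
end

section
/- Suppose there are no local flows, i.e. Σ_{l=1}^L a_{lr} ≥ 2 for every flow r. Let each utility u_r : [0,∞) → ℝ be strictly increasing and let the weights b_r ≥ 0 be arbitrary. Then any feasible strategy profile S such that for all links l₁, l₂ and every flow r with a_{l₁r} = a_{l₂r} = 1 one has s_{l₁r} = s_{l₂r} (i.e., all links on a flow's path allocate it the same amount) is a pure Nash equilibrium of the capacity allocation game. -/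
open Finset

/-- if there are no local flows (every flow traverses at least two links),
then any feasible profile in which all links on a flow's path allocate it the same amount
is a pure Nash equilibrium, for any strictly increasing utilities and any weights. -/
theorem equal_allocations_nash_no_local_flows
    {L R : ℕ} (a : Fin L → Fin R → Bool) (c : Fin L → ℝ)
    (b : Fin R → ℝ) (u : Fin R → ℝ → ℝ) (S : Fin L → Fin R → ℝ)
    (hc : ∀ l, 0 < c l)
    (hnolocal : ∀ r : Fin R, 2 ≤ (Finset.univ.filter (fun l => a l r = true)).card)
    (hmono : ∀ r, StrictMonoOn (u r) (Set.Ici 0))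
    (hb : ∀ r, 0 ≤ b r)
    (hS : FeasibleProfile a c S)
    (heq : ∀ l₁ l₂ : Fin L, ∀ r : Fin R, a l₁ r = true → a l₂ r = true → S l₁ r = S l₂ r) :
    NashEq a c b u S := by
  intro l s' hs'
  unfold payoff
  apply Finset.sum_le_sum
  intro r hr
  rw [Finset.mem_filter] at hr
  have halr : a l r = true := hr.2
  -- pick another link k ≠ l on the path
  obtain ⟨k, hk, hkl⟩ : ∃ k, a k r = true ∧ k ≠ l := by
    have h2 := hnolocal r
    by_contra hcon
    push_neg at hcon
    have hsub : (Finset.univ.filter (fun l => a l r = true)) ⊆ {l} := by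
      intro x hx
      rw [Finset.mem_filter] at hx
      rcases eq_or_ne x l with h | h
      · simp [h]
      · exact absurd (hcon x hx.2) (by simp [h])
    have := Finset.card_le_card hsub
    simp at this
    omega
  set S' := Function.update S l s' with hS'
  -- old min equals S l r
  have hold : linkMin a S r = S l r := by
    unfold linkMin
    have : {v : ℝ | ∃ k, a k r = true ∧ v = S k r} = {S l r} := by
      ext v
      constructor
      · rintro ⟨j, hj, rfl⟩
        exact heq j l r hj halr
      · rintro rfl
        exact ⟨l, halr, rfl⟩
    rw [this, csInf_singleton]
  -- new min nonneg and ≤ old min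
  have hmemnew : S' k r ∈ {v : ℝ | ∃ j, a j r = true ∧ v = S' j r} := ⟨k, hk, rfl⟩
  have hbdd : ∀ v ∈ {v : ℝ | ∃ j, a j r = true ∧ v = S' j r}, 0 ≤ v := by
    rintro v ⟨j, hj, rfl⟩
    rcases eq_or_ne j l with h | h
    · rw [hS', h, Function.update_self]; exact hs'.1 r
    · rw [hS', Function.update_of_ne h]; exact (hS j).1 r
  have hnewnn : 0 ≤ linkMin a S' r :=
    le_csInf ⟨_, hmemnew⟩ (fun v hv => hbdd v hv)
  have hnewle : linkMin a S' r ≤ linkMin a S r := by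
    have h1 : linkMin a S' r ≤ S' k r :=
      csInf_le ⟨0, fun v hv => hbdd v hv⟩ hmemnew
    have h2 : S' k r = S l r := by
      rw [hS', Function.update_of_ne hkl]
      exact heq k l r hk halr
    rw [hold]; rw [h2] at h1; exact h1
  have holdnn : 0 ≤ linkMin a S r := by rw [hold]; exact (hS l).1 r
  apply mul_le_mul_of_nonneg_left _ (hb r)
  exact (hmono r).monotoneOn hnewnn holdnn hnewle
end

section
/- Suppose there are no local flows, i.e. Σ_{l=1}^L a_{lr} ≥ 2 for every flow r, all link capacities satisfy c_l > 0, and utilities are isoelastic, u_r(x) = w_r x^{1-γ}/(1-γ) with w_r > 0 and 0 < γ < 1. Then the zero strategy profile (s_{lr} = 0 for all l, r) is a pure Nash equilibrium (for any weights b_r ≥ 0), its social welfare is 0, while the maximal social welfare over all feasible strategy profiles is strictly positive. Consequently the Price of Anarchy of the game is unbounded (the ratio of optimal welfare to worst-equilibrium welfare is infinite). -/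
open Finset

/-- with no local flows and isoelastic utilities, the zero profile is a pure
Nash equilibrium with social welfare 0, while the maximal social welfare over feasible
profiles is strictly positive; consequently the Price of Anarchy is unbounded (the optimal
welfare exceeds any multiple of the worst-equilibrium welfare). -/
theorem zero_profile_nash_welfare_zero_poa_unbounded
    {L R : ℕ} (a : Fin L → Fin R → Bool) (c : Fin L → ℝ)
    (b : Fin R → ℝ) (w : Fin R → ℝ) (γ : ℝ) (u : Fin R → ℝ → ℝ)
    (hR : 0 < R)
    (hc : ∀ l, 0 < c l)
    (hflow : ∀ r : Fin R, ∃ l, a l r = true)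
    (hnolocal : ∀ r : Fin R, 2 ≤ (Finset.univ.filter (fun l => a l r = true)).card)
    (hw : ∀ r, 0 < w r) (hγ0 : 0 < γ) (hγ1 : γ < 1)
    (hu : ∀ r x, u r x = w r * x ^ (1 - γ) / (1 - γ))
    (hb : ∀ r, 0 ≤ b r) :
    FeasibleProfile a c (fun _ _ => 0) ∧
    NashEq a c b u (fun _ _ => 0) ∧
    welfare a u (fun _ _ => 0) = 0 ∧
    (∃ S', FeasibleProfile a c S' ∧ 0 < welfare a u S') ∧
    (∀ M : ℝ, ∃ Sopt SNash : Fin L → Fin R → ℝ,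
      FeasibleProfile a c Sopt ∧ FeasibleProfile a c SNash ∧ NashEq a c b u SNash ∧
      M * welfare a u SNash < welfare a u Sopt) := by

  have hγ : (0:ℝ) < 1 - γ := by linarith
  have hu0 : ∀ r, u r 0 = 0 := by
    intro r
    rw [hu, Real.zero_rpow (by linarith : (1:ℝ) - γ ≠ 0)]
    ring
  -- linkMin of zero profile is 0
  have hz : ∀ r : Fin R, linkMin a (fun _ _ => (0:ℝ)) r = 0 := by
    intro r
    unfold linkMin
    have hset : {v : ℝ | ∃ k, a k r = true ∧ v = (fun (_ : Fin L) (_ : Fin R) => (0:ℝ)) k r} = {0} := by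
      ext v
      simp only [Set.mem_setOf_eq, Set.mem_singleton_iff]
      constructor
      · rintro ⟨k, _, h⟩; exact h
      · rintro rfl; obtain ⟨l, hl⟩ := hflow r; exact ⟨l, hl, rfl⟩
    rw [hset, csInf_singleton]
  have hfeas0 : FeasibleProfile a c (fun _ _ => 0) := by
    intro l
    refine ⟨fun r => le_refl 0, fun r _ => rfl, ?_⟩
    simp only [Finset.sum_const_zero]
    exact (hc l).le
  have hnash : NashEq a c b u (fun _ _ => 0) := by
    intro l s' hs'
    apply le_of_eq
    unfold payoff
    apply Finset.sum_congr rfl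
    intro r hr
    simp only [Finset.mem_filter] at hr
    congr 2
    rw [hz r]
    -- show linkMin of updated profile is 0
    unfold linkMin
    -- find k ≠ l with a k r = true
    obtain ⟨k₁, hk₁, k₂, hk₂, hne⟩ := Finset.one_lt_card.mp (lt_of_lt_of_le one_lt_two (hnolocal r))
    simp only [Finset.mem_filter] at hk₁ hk₂
    obtain ⟨k, hk, hkl⟩ : ∃ k, a k r = true ∧ k ≠ l := by
      by_cases h : k₁ = l
      · subst h; exact ⟨k₂, hk₂.2, hne.symm⟩
      · exact ⟨k₁, hk₁.2, h⟩
    have h0mem : (0:ℝ) ∈ {v : ℝ | ∃ k, a k r = true ∧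
        v = Function.update (fun _ _ => (0:ℝ)) l s' k r} := by
      refine ⟨k, hk, ?_⟩
      rw [Function.update_of_ne hkl]
    have hlb : ∀ v ∈ {v : ℝ | ∃ k, a k r = true ∧
        v = Function.update (fun _ _ => (0:ℝ)) l s' k r}, (0:ℝ) ≤ v := by
      rintro v ⟨k', _, rfl⟩
      by_cases h : k' = l
      · subst h; rw [Function.update_self]; exact hs'.1 r
      · rw [Function.update_of_ne h]
    exact le_antisymm (csInf_le ⟨0, hlb⟩ h0mem) (le_csInf ⟨0, h0mem⟩ hlb)
  have hwelf0 : welfare a u (fun _ _ => 0) = 0 := by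
    unfold welfare
    apply Finset.sum_eq_zero
    intro r _
    rw [hz r, hu0 r]
  -- positive profile
  set S' : Fin L → Fin R → ℝ := fun l r => if a l r = true then c l / R else 0 with hS'
  have hRpos : (0:ℝ) < R := by exact_mod_cast hR
  have hfeasS' : FeasibleProfile a c S' := by
    intro l
    refine ⟨fun r => ?_, fun r h => ?_, ?_⟩
    · by_cases h : a l r = true
      · simp only [hS', h, if_true]
        exact le_of_lt (div_pos (hc l) hRpos)
      · simp [hS', h]
    · simp [hS', h]
    · have : ∀ r ∈ Finset.univ.filter (fun r => a l r = true), S' l r = c l / R := by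
        intro r hr
        simp only [Finset.mem_filter] at hr
        simp [hS', hr.2]
      rw [Finset.sum_congr rfl this, Finset.sum_const, nsmul_eq_mul]
      have hcard : ((Finset.univ.filter (fun r => a l r = true)).card : ℝ) ≤ R := by
        exact_mod_cast le_trans (Finset.card_filter_le _ _) (by simp)
      calc ((Finset.univ.filter (fun r => a l r = true)).card : ℝ) * (c l / R)
          ≤ R * (c l / R) := by
            apply mul_le_mul_of_nonneg_right hcard
            exact le_of_lt (div_pos (hc l) hRpos)
        _ = c l := by field_simp
  have hminpos : ∀ r, 0 < linkMin a S' r := by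
    intro r
    unfold linkMin
    set T := {v : ℝ | ∃ k, a k r = true ∧ v = S' k r} with hT
    have hTne : T.Nonempty := by
      obtain ⟨l, hl⟩ := hflow r
      exact ⟨S' l r, l, hl, rfl⟩
    have hTfin : T.Finite := by
      apply Set.Finite.subset (Set.finite_range (fun k => S' k r))
      rintro v ⟨k, _, rfl⟩
      exact ⟨k, rfl⟩
    obtain ⟨k, hk, hkv⟩ := hTne.csInf_mem hTfin
    rw [hkv]
    simp only [hS', hk, if_true]
    exact div_pos (hc k) hRpos
  have hwelfS' : 0 < welfare a u S' := by
    unfold welfare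
    apply Finset.sum_pos
    · intro r _
      rw [hu r]
      have := hminpos r
      have hp : 0 < (linkMin a S' r) ^ (1 - γ) := Real.rpow_pos_of_pos this _
      exact div_pos (mul_pos (hw r) hp) hγ
    · exact Finset.univ_nonempty_iff.mpr ⟨⟨0, hR⟩⟩
  refine ⟨hfeas0, hnash, hwelf0, ⟨S', hfeasS', hwelfS'⟩, ?_⟩
  intro M
  exact ⟨S', (fun _ _ => 0), hfeasS', hfeas0, hnash, by rw [hwelf0, mul_zero]; exact hwelfS'⟩
end

section
/- There exists an instance for which the global optimum of the NUM problem does not induce a Nash equilibrium of the capacity allocation game with path length payoffs. Concretely: take L = 10 links of equal capacity c_1 = … = c_10 = 6, and R = 2 flows, where flow 1 passes through all 10 links with utility u_1(x) = 10 log x, and flow 2 passes only through link 1 with utility u_2(x) = 2 log x; the path length weights are b_1 = 1/10 and b_2 = 1. Then: (i) the unique optimal solution of the NUM problem (maximize u_1(x_1) + u_2(x_2) subject to x_1 + x_2 ≤ 6 on link 1, x_1 ≤ 6 on links 2,…,10, x ≥ 0) is x* = (5, 1); (ii) the induced strategy profile (s_{l1} = 5 for all l, s_{12} = 1, s_{l2}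 = 0 for l ≥ 2) is not a pure Nash equilibrium, because player 1's feasible deviation s'_1 = (2, 4) yields payoff (1/10)·10·log 2 + 1·2·log 4 = log 2 + log 16, which exceeds the payoff (1/10)·10·log 5 + 1·2·log 1 = log 5 obtained at the induced profile. -/
open Finset

private lemma log_bound {y : ℝ} (hy : 0 < y) :
    Real.log y ≤ Real.log 5 + (y / 5 - 1) := by
  have h := Real.log_le_sub_one_of_pos (show (0:ℝ) < y / 5 by positivity)
  rw [Real.log_div hy.ne' (by norm_num)] at h
  linarith

private lemma log_bound_strict {y : ℝ} (hy : 0 < y) (hne : y ≠ 5) :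
    Real.log y < Real.log 5 + (y / 5 - 1) := by
  have h := Real.log_lt_sub_one_of_pos (show (0:ℝ) < y / 5 by positivity)
    (by intro h; apply hne; field_simp at h; linarith)
  rw [Real.log_div hy.ne' (by norm_num)] at h
  linarith

/-- a concrete 10-link, 2-flow instance where the (unique) NUM optimum
`x* = (5,1)` does not induce a Nash equilibrium of the game with path length payoffs:
player 1's deviation `(2,4)` yields payoff `log 2 + log 16 > log 5`. -/
theorem num_optimum_not_nash_for_path_length_payoffs
    (a : Fin 10 → Fin 2 → Bool)
    (ha : ∀ l r, a l r = (decide (r = (0 : Fin 2)) || decide (l = (0 : Fin 10))))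
    (c : Fin 10 → ℝ) (hc : ∀ l, c l = 6)
    (u : Fin 2 → ℝ → ℝ)
    (hu0 : ∀ x, u 0 x = 10 * Real.log x) (hu1 : ∀ x, u 1 x = 2 * Real.log x)
    (b : Fin 2 → ℝ) (hb0 : b 0 = 1/10) (hb1 : b 1 = 1)
    (xstar : Fin 2 → ℝ) (hx0 : xstar 0 = 5) (hx1 : xstar 1 = 1)
    (S : Fin 10 → Fin 2 → ℝ) (hS : ∀ l r, S l r = if a l r then xstar r else 0)
    (s' : Fin 2 → ℝ) (hs'0 : s' 0 = 2) (hs'1 : s' 1 = 4) :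
    -- (i) x* is the unique optimal solution of the NUM problem (among positive rates,
    -- where the logarithmic utilities are finite)
    ((∀ y : Fin 2 → ℝ, (∀ r, 0 < y r) →
        (∀ l, (∑ r ∈ Finset.univ.filter (fun r => a l r = true), y r) ≤ c l) →
        (∑ r, u r (y r)) ≤ ∑ r, u r (xstar r)) ∧
      (∀ y : Fin 2 → ℝ, (∀ r, 0 < y r) →
        (∀ l, (∑ r ∈ Finset.univ.filter (fun r => a l r = true), y r) ≤ c l) →
        (∑ r, u r (y r)) = (∑ r, u r (xstar r)) → y = xstar)) ∧
    -- (ii) the induced profile is not a Nash equilibrium: the deviation (2,4) of player 1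
    -- is feasible and strictly improves its payoff from log 5 to log 2 + log 16
    FeasibleStrat a c 0 s' ∧
    payoff a b u 0 S = Real.log 5 ∧
    payoff a b u 0 (Function.update S 0 s') = Real.log 2 + Real.log 16 ∧
    payoff a b u 0 S < payoff a b u 0 (Function.update S 0 s') ∧
    ¬ NashEq a c b u S := by
  
  have ha0 : ∀ r : Fin 2, a 0 r = true := fun r => by rw [ha]; simp
  have hak0 : ∀ k : Fin 10, a k 0 = true := fun k => by rw [ha]; simp
  have hak1 : ∀ k : Fin 10, a k 1 = true ↔ k = 0 := fun k => by rw [ha]; simp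
  have hfilt0 : (Finset.univ.filter (fun r : Fin 2 => a 0 r = true)) = Finset.univ :=
    Finset.filter_true_of_mem fun r _ => ha0 r
  -- linkMin values of S
  have hset0 : {v : ℝ | ∃ k, a k 0 = true ∧ v = S k 0} = {5} := by
    ext v
    simp only [Set.mem_setOf_eq, Set.mem_singleton_iff]
    constructor
    · rintro ⟨k, -, rfl⟩; rw [hS, hak0, if_pos rfl, hx0]
    · intro hv; exact ⟨0, hak0 0, by rw [hS, hak0, if_pos rfl, hx0, hv]⟩
  have hmin0 : linkMin a S 0 = 5 := by rw [linkMin, hset0, csInf_singleton]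
  have hset1 : {v : ℝ | ∃ k, a k 1 = true ∧ v = S k 1} = {1} := by
    ext v
    simp only [Set.mem_setOf_eq, Set.mem_singleton_iff]
    constructor
    · rintro ⟨k, hk, rfl⟩
      obtain rfl := (hak1 k).1 hk
      rw [hS, ha0 1, if_pos rfl, hx1]
    · intro hv; exact ⟨0, (hak1 0).2 rfl, by rw [hS, ha0 1, if_pos rfl, hx1, hv]⟩
  have hmin1 : linkMin a S 1 = 1 := by rw [linkMin, hset1, csInf_singleton]
  -- linkMin values of updated profile
  set U := Function.update S 0 s' with hU
  have hU0 : ∀ r, U 0 r = s' r := fun r => by rw [hU, Function.update_self]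
  have hUk : ∀ k : Fin 10, k ≠ 0 → ∀ r, U k r = S k r := fun k hk r => by
    rw [hU, Function.update_of_ne hk]
  have hsetU0 : {v : ℝ | ∃ k, a k 0 = true ∧ v = U k 0} = {2, 5} := by
    ext v
    simp only [Set.mem_setOf_eq, Set.mem_insert_iff, Set.mem_singleton_iff]
    constructor
    · rintro ⟨k, -, rfl⟩
      by_cases hk : k = 0
      · subst hk; left; rw [hU0, hs'0]
      · right; rw [hUk k hk, hS, hak0, if_pos rfl, hx0]
    · rintro (hv | hv)
      · exact ⟨0, hak0 0, by rw [hU0, hs'0, hv]⟩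
      · exact ⟨1, hak0 1, by rw [hUk 1 (by decide), hS, hak0, if_pos rfl, hx0, hv]⟩
  have hminU0 : linkMin a U 0 = 2 := by
    rw [linkMin, hsetU0, csInf_pair]
    norm_num
  have hsetU1 : {v : ℝ | ∃ k, a k 1 = true ∧ v = U k 1} = {4} := by
    ext v
    simp only [Set.mem_setOf_eq, Set.mem_singleton_iff]
    constructor
    · rintro ⟨k, hk, rfl⟩
      obtain rfl := (hak1 k).1 hk
      rw [hU0, hs'1]
    · intro hv; exact ⟨0, (hak1 0).2 rfl, by rw [hU0, hs'1, hv]⟩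
  have hminU1 : linkMin a U 1 = 4 := by rw [linkMin, hsetU1, csInf_singleton]
  -- payoffs
  have hpay : payoff a b u 0 S = Real.log 5 := by
    rw [payoff, hfilt0, Fin.sum_univ_two, hmin0, hmin1, hb0, hb1, hu0, hu1,
      Real.log_one]
    ring
  have hlog16 : Real.log 16 = 2 * Real.log 4 := by
    rw [show (16:ℝ) = 4 ^ 2 by norm_num, Real.log_pow]
    push_cast; ring
  have hpayU : payoff a b u 0 U = Real.log 2 + Real.log 16 := by
    rw [payoff, hfilt0, Fin.sum_univ_two, hminU0, hminU1, hb0, hb1, hu0, hu1, hlog16]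
    ring
  have hlt : payoff a b u 0 S < payoff a b u 0 U := by
    rw [hpay, hpayU, ← Real.log_mul (by norm_num) (by norm_num)]
    have : (2:ℝ) * 16 = 32 := by norm_num
    rw [this]
    exact Real.log_lt_log (by norm_num) (by norm_num)
  have hfeas' : FeasibleStrat a c 0 s' := by
    refine ⟨fun r => ?_, fun r hr => ?_, ?_⟩
    · fin_cases r <;> simp [hs'0, hs'1]
    · rw [ha0 r] at hr; simp at hr
    · rw [hfilt0, Fin.sum_univ_two, hs'0, hs'1, hc]; norm_num
  have hconstraint : ∀ y : Fin 2 → ℝ,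
      (∀ l, (∑ r ∈ Finset.univ.filter (fun r => a l r = true), y r) ≤ c l) →
      y 0 + y 1 ≤ 6 := by
    intro y hy
    have h := hy 0
    rwa [hfilt0, Fin.sum_univ_two, hc] at h
  refine ⟨⟨?_, ?_⟩, hfeas', hpay, hpayU, hlt, ?_⟩
  · intro y hpos hfeas
    rw [Fin.sum_univ_two, Fin.sum_univ_two, hu0, hu1, hu0, hu1, hx0, hx1, Real.log_one]
    have h0 := log_bound (hpos 0)
    have h1 := Real.log_le_sub_one_of_pos (hpos 1)
    have h6 := hconstraint y hfeas
    linarith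
  · intro y hpos hfeas heq
    rw [Fin.sum_univ_two, Fin.sum_univ_two, hu0, hu1, hu0, hu1, hx0, hx1,
      Real.log_one] at heq
    have h6 := hconstraint y hfeas
    have h1 := Real.log_le_sub_one_of_pos (hpos 1)
    have h0 := log_bound (hpos 0)
    have hy0 : y 0 = 5 := by
      by_contra hne
      have := log_bound_strict (hpos 0) hne
      linarith
    have hy1 : y 1 = 1 := by
      by_contra hne
      have := Real.log_lt_sub_one_of_pos (hpos 1) hne
      linarith
    funext r
    fin_cases r
    · exact hy0.trans hx0.symm
    · exact hy1.trans hx1.symm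
  · intro hN
    exact absurd (hN 0 s' hfeas') (not_le.mpr hlt)
end

section
/- Let f_m : [0,∞) → ℝ, m = 1,…,M, be continuous, strictly increasing, strictly concave and twice-differentiable functions. For β ≥ 0 let α*(β) ∈ ℝ^M denote the (unique) maximizer of Σ_{m=1}^M f_m(α_m) over the set {α ∈ ℝ^M : α_m ≥ 0 for all m, Σ_{m=1}^M α_m = β}. Then each component α*_m(β) is a nondecreasing function of β: if 0 ≤ β₁ ≤ β₂, then α*_m(β₁) ≤ α*_m(β₂) for every m = 1,…,M. -/
open Finset

lemma concave_increment {f : ℝ → ℝ} (hf : ConcaveOn ℝ (Set.Ici 0) f)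
    {a b t : ℝ} (ha : 0 ≤ a) (hab : a ≤ b) (ht : 0 ≤ t) :
    f (b + t) - f b ≤ f (a + t) - f a := by
  rcases eq_or_lt_of_le ht with rfl | ht
  · simp
  rcases eq_or_lt_of_le hab with rfl | hab
  · simp
  have hL : 0 < b + t - a := by linarith
  have hbt : (0:ℝ) ≤ b + t := by linarith
  have h1 := hf.2 (Set.mem_Ici.2 ha) (Set.mem_Ici.2 hbt)
    (div_nonneg (by linarith : (0:ℝ) ≤ b - a) hL.le)
    (div_nonneg ht.le hL.le)
    (by field_simp; ring)
  have h2 := hf.2 (Set.mem_Ici.2 ha) (Set.mem_Ici.2 hbt)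
    (div_nonneg ht.le hL.le)
    (div_nonneg (by linarith : (0:ℝ) ≤ b - a) hL.le)
    (by field_simp; ring)
  have e1 : ((b - a) / (b + t - a)) • a + (t / (b + t - a)) • (b + t) = a + t := by
    rw [smul_eq_mul, smul_eq_mul]; field_simp; ring
  have e2 : (t / (b + t - a)) • a + ((b - a) / (b + t - a)) • (b + t) = b := by
    rw [smul_eq_mul, smul_eq_mul]; field_simp; ring
  rw [e1] at h1
  rw [e2] at h2
  rw [smul_eq_mul, smul_eq_mul] at h1 h2
  have hsum : (b - a)/(b + t - a) + t/(b + t - a) = 1 := by field_simp; ring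
  have key : f a + f (b + t) = ((b - a)/(b + t - a) + t/(b + t - a)) * (f a + f (b + t)) := by
    rw [hsum]; ring
  nlinarith [h1, h2, key]

lemma sum_shift {M : ℕ} (x : Fin M → ℝ) {m k : Fin M} (δ : ℝ) :
    ∑ i, (x i + (if i = k then δ else 0) - (if i = m then δ else 0)) = ∑ i, x i := by
  simp [Finset.sum_add_distrib, Finset.sum_sub_distrib]

lemma sum_update2 {M : ℕ} (g : Fin M → ℝ → ℝ) (x : Fin M → ℝ) {m k : Fin M}
    (hkm : k ≠ m) (δ : ℝ) :
    ∑ i, g i (x i + (if i = k then δ else 0) - (if i = m then δ else 0))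
      = ∑ i, g i (x i) + (g k (x k + δ) - g k (x k)) + (g m (x m - δ) - g m (x m)) := by
  have h : ∑ i, g i (x i + (if i = k then δ else 0) - (if i = m then δ else 0))
      - ∑ i, g i (x i)
      = ∑ i, (g i (x i + (if i = k then δ else 0) - (if i = m then δ else 0)) - g i (x i)) := by
    rw [Finset.sum_sub_distrib]
  have h2 : ∑ i, (g i (x i + (if i = k then δ else 0) - (if i = m then δ else 0)) - g i (x i))
      = ∑ i ∈ ({k, m} : Finset (Fin M)),
          (g i (x i + (if i = k then δ else 0) - (if i = m then δ else 0)) - g i (x i)) := by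
    refine (Finset.sum_subset (Finset.subset_univ _) ?_).symm
    intro i _ hi
    simp only [Finset.mem_insert, Finset.mem_singleton, not_or] at hi
    simp [hi.1, hi.2]
  rw [Finset.sum_pair hkm] at h2
  norm_num [hkm, Ne.symm hkm] at h2
  linarith [h, h2]


/-- Lemma 1: for continuous, strictly increasing, strictly concave,
twice-differentiable `f_m`, each component of the (unique) maximizer of
`∑ f_m(α_m)` over nonnegative vectors summing to `β` is nondecreasing in `β`. -/
theorem budget_allocation_components_monotone
    {M : ℕ} (f : Fin M → ℝ → ℝ)
    (hcont : ∀ m, ContinuousOn (f m) (Set.Ici 0))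
    (hmono : ∀ m, StrictMonoOn (f m) (Set.Ici 0))
    (hconc : ∀ m, StrictConcaveOn ℝ (Set.Ici 0) (f m))
    (hsmooth : ∀ m, ContDiffOn ℝ 2 (f m) (Set.Ici 0))
    (α : ℝ → Fin M → ℝ)
    (hα : ∀ β : ℝ, 0 ≤ β →
      (∀ m, 0 ≤ α β m) ∧ (∑ m, α β m) = β ∧
      (∀ y : Fin M → ℝ, (∀ m, 0 ≤ y m) → (∑ m, y m) = β →
        (∑ m, f m (y m)) ≤ ∑ m, f m (α β m))) :
    ∀ β₁ β₂ : ℝ, 0 ≤ β₁ → β₁ ≤ β₂ → ∀ m, α β₁ m ≤ α β₂ m := by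
  intro β₁ β₂ hβ₁ h12 m
  by_contra hlt
  push_neg at hlt
  set x : Fin M → ℝ := α β₁ with hxdef
  set y : Fin M → ℝ := α β₂ with hydef
  obtain ⟨hx0, hxs, hxopt⟩ := hα β₁ hβ₁
  obtain ⟨hy0, hys, hyopt⟩ := hα β₂ (hβ₁.trans h12)
  -- find a coordinate k where y exceeds x
  have hk : ∃ k, x k < y k := by
    by_contra hc
    push_neg at hc
    have : ∑ i, y i < ∑ i, x i :=
      Finset.sum_lt_sum (fun i _ => hc i) ⟨m, Finset.mem_univ m, hlt⟩
    rw [hxs, hys] at this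
    linarith
  obtain ⟨k, hk⟩ := hk
  have hkm : k ≠ m := by rintro rfl; linarith
  set ε : ℝ := min (x m - y m) (y k - x k) with hεdef
  have hε : 0 < ε := lt_min (by linarith) (by linarith)
  have hε1 : ε ≤ x m - y m := min_le_left _ _
  have hε2 : ε ≤ y k - x k := min_le_right _ _
  -- perturbation of x : move ε from m to k
  set x' : Fin M → ℝ := fun i => x i + (if i = k then ε else 0) - (if i = m then ε else 0)
    with hx'def
  have hx'0 : ∀ i, 0 ≤ x' i := by
    intro i
    by_cases h1 : i = k
    · simp only [hx'def, h1, if_pos rfl, if_neg hkm, if_true, sub_zero]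
      linarith [hx0 k]
    · by_cases h2 : i = m
      · simp only [hx'def, h1, h2, if_neg, if_pos rfl]
        simp [h2 ▸ h1]
        linarith [hy0 m]
      · simp only [hx'def, if_neg h1, if_neg h2]
        linarith [hx0 i]
  have hx's : ∑ i, x' i = β₁ := by rw [hx'def, sum_shift]; exact hxs
  have hAx := hxopt x' hx'0 hx's
  rw [hx'def, sum_update2 f x hkm ε] at hAx
  have hA : (f k (x k + ε) - f k (x k)) + (f m (x m - ε) - f m (x m)) ≤ 0 := by linarith
  -- perturbation of y : move ε from k to m
  set y' : Fin M → ℝ := fun i => y i + (if i = m then ε else 0) - (if i = k then ε else 0)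
    with hy'def
  have hy'0 : ∀ i, 0 ≤ y' i := by
    intro i
    by_cases h1 : i = m
    · simp only [hy'def, h1, if_pos rfl, if_neg (Ne.symm hkm), if_true, sub_zero]
      linarith [hy0 m]
    · by_cases h2 : i = k
      · simp only [hy'def, h1, h2, if_pos rfl]
        simp [h2 ▸ h1]
        linarith [hx0 k]
      · simp only [hy'def, if_neg h1, if_neg h2]
        linarith [hy0 i]
  have hy's : ∑ i, y' i = β₂ := by rw [hy'def, sum_shift]; exact hys
  have hBy := hyopt y' hy'0 hy's
  rw [hy'def, sum_update2 f y (Ne.symm hkm) ε] at hBy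
  have hB : (f m (y m + ε) - f m (y m)) + (f k (y k - ε) - f k (y k)) ≤ 0 := by linarith
  -- concavity increment inequalities
  have hC : f m (x m) - f m (x m - ε) ≤ f m (y m + ε) - f m (y m) := by
    have := concave_increment (hconc m).concaveOn (hy0 m)
      (show y m ≤ x m - ε by linarith) hε.le
    have hxm : x m - ε + ε = x m := by ring
    rwa [hxm] at this
  have hD : f k (y k) - f k (y k - ε) ≤ f k (x k + ε) - f k (x k) := by
    have := concave_increment (hconc k).concaveOn (hx0 k)
      (show x k ≤ y k - ε by linarith) hε.le
    have hyk : y k - ε + ε = y k := by ring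
    rwa [hyk] at this
  -- equality in hA
  have hAe : f k (x k + ε) + f m (x m - ε) = f k (x k) + f m (x m) := by linarith
  -- midpoint perturbation: strictly better, contradiction
  set z : Fin M → ℝ := fun i => x i + (if i = k then ε/2 else 0) - (if i = m then ε/2 else 0)
    with hzdef
  have hz0 : ∀ i, 0 ≤ z i := by
    intro i
    by_cases h1 : i = k
    · simp only [hzdef, h1, if_pos rfl, if_neg hkm, if_true, sub_zero]
      linarith [hx0 k]
    · by_cases h2 : i = m
      · simp only [hzdef, h1, h2, if_pos rfl]
        simp [h2 ▸ h1]
        linarith [hy0 m]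
      · simp only [hzdef, if_neg h1, if_neg h2]
        linarith [hx0 i]
  have hzs : ∑ i, z i = β₁ := by rw [hzdef, sum_shift]; exact hxs
  have hzopt := hxopt z hz0 hzs
  rw [hzdef, sum_update2 f x hkm (ε/2)] at hzopt
  -- strict concavity at m
  have hm_strict : (f m (x m) + f m (x m - ε)) / 2 < f m (x m - ε/2) := by
    have hne : x m ≠ x m - ε := by intro h; linarith [hε]
    have := (hconc m).2 (Set.mem_Ici.2 (by linarith [hx0 m, hy0 m] : (0:ℝ) ≤ x m))
      (Set.mem_Ici.2 (by linarith [hy0 m] : (0:ℝ) ≤ x m - ε)) hne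
      (by norm_num : (0:ℝ) < 1/2) (by norm_num : (0:ℝ) < 1/2) (by norm_num)
    rw [smul_eq_mul, smul_eq_mul, smul_eq_mul, smul_eq_mul] at this
    have harg : (1/2 : ℝ) * x m + (1/2 : ℝ) * (x m - ε) = x m - ε/2 := by ring
    rw [harg] at this
    linarith
  -- concavity at k
  have hk_conc : (f k (x k) + f k (x k + ε)) / 2 ≤ f k (x k + ε/2) := by
    have := (hconc k).concaveOn.2 (Set.mem_Ici.2 (hx0 k))
      (Set.mem_Ici.2 (by linarith [hx0 k] : (0:ℝ) ≤ x k + ε))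
      (by norm_num : (0:ℝ) ≤ 1/2) (by norm_num : (0:ℝ) ≤ 1/2) (by norm_num)
    rw [smul_eq_mul, smul_eq_mul, smul_eq_mul, smul_eq_mul] at this
    have harg : (1/2 : ℝ) * x k + (1/2 : ℝ) * (x k + ε) = x k + ε/2 := by ring
    rw [harg] at this
    linarith
  linarith
end

section
/- Fix a player l and a strategy profile S = (s_1,…,s_L) of the capacity allocation game, and let s'_l be any feasible strategy of player l. Let T be a set of flows such that every r ∈ T satisfies a_{lr} = 1 and traverses at least one link other than l, and define m_r = min_{k ≠ l : a_{kr}=1} s_{kr} for r ∈ T. Define the strategy s''_l by s''_{lr} = min{s'_{lr}, m_r} for r ∈ T and s''_{lr} = s'_{lr} for r ∉ T. Then s''_l is feasible (s''_{lr} ≥ 0, s''_{lr} = 0 whenever a_{lr} = 0, and Σ_r a_{lr} s''_{lr} ≤ c_l), and it yields exactly the same payoff: Q_l(s''_l, S_{−l}) = Q_l(s'_l, S_{−l}). In particular, allocating to a flow more capacity than the minimum allocated to it by the other links on its path never changes the player's payoff. -/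
open Finset

/-- cf. Lemma 2: capping, on a set `T` of flows that also traverse some
other link, player `l`'s allocations at the minimum allocated by the other links on the
flow's path yields a feasible strategy with exactly the same payoff. -/
theorem capping_at_others_minimum_preserves_payoff
    {L R : ℕ} (a : Fin L → Fin R → Bool) (c : Fin L → ℝ)
    (b : Fin R → ℝ) (u : Fin R → ℝ → ℝ)
    (S : Fin L → Fin R → ℝ) (l : Fin L) (s' : Fin R → ℝ) (T : Finset (Fin R))
    (hc : ∀ k, 0 < c k)
    (hflow : ∀ r : Fin R, ∃ k, a k r = true)
    (hu : ∀ r, MonotoneOn (u r) (Set.Ici 0))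
    (hb : ∀ r, 0 ≤ b r)
    (hS : FeasibleProfile a c S)
    (hs' : FeasibleStrat a c l s')
    (hT : ∀ r ∈ T, a l r = true ∧ ∃ k, k ≠ l ∧ a k r = true) :
    FeasibleStrat a c l
      (fun r => if r ∈ T then
        min (s' r) (sInf {v : ℝ | ∃ k, k ≠ l ∧ a k r = true ∧ v = S k r}) else s' r) ∧
    payoff a b u l (Function.update S l
      (fun r => if r ∈ T then
        min (s' r) (sInf {v : ℝ | ∃ k, k ≠ l ∧ a k r = true ∧ v = S k r}) else s' r)) =
    payoff a b u l (Function.update S l s') := by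

  classical
  obtain ⟨h1, h2, h3⟩ := hs'
  set f : Fin R → ℝ := fun r => if r ∈ T then
      min (s' r) (sInf {v : ℝ | ∃ k, k ≠ l ∧ a k r = true ∧ v = S k r}) else s' r with hf
  have hCfin : ∀ r : Fin R, ({v : ℝ | ∃ k, k ≠ l ∧ a k r = true ∧ v = S k r}).Finite := by
    intro r
    have hsub : {v : ℝ | ∃ k, k ≠ l ∧ a k r = true ∧ v = S k r}
        ⊆ (fun k => S k r) '' Set.univ := by
      rintro v ⟨k, _, _, rfl⟩; exact ⟨k, trivial, rfl⟩
    exact Set.Finite.subset ((Set.finite_univ).image _) hsub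
  have hCne : ∀ r ∈ T, ({v : ℝ | ∃ k, k ≠ l ∧ a k r = true ∧ v = S k r}).Nonempty := by
    intro r hr
    obtain ⟨_, k, hkl, hka⟩ := hT r hr
    exact ⟨S k r, k, hkl, hka, rfl⟩
  have hmnn : ∀ r ∈ T, 0 ≤ sInf {v : ℝ | ∃ k, k ≠ l ∧ a k r = true ∧ v = S k r} := by
    intro r hr
    apply le_csInf (hCne r hr)
    rintro v ⟨k', _, _, rfl⟩; exact (hS k').1 r
  have hset : ∀ (g : Fin R → ℝ) (r : Fin R), a l r = true →
      {v : ℝ | ∃ k, a k r = true ∧ v = Function.update S l g k r}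
        = insert (g r) {v : ℝ | ∃ k, k ≠ l ∧ a k r = true ∧ v = S k r} := by
    intro g r hr
    ext v
    simp only [Set.mem_setOf_eq, Set.mem_insert_iff]
    constructor
    · rintro ⟨k, hka, rfl⟩
      by_cases hk : k = l
      · subst hk; left; simp
      · right; exact ⟨k, hk, hka, by simp [Function.update, hk]⟩
    · rintro (rfl | ⟨k, hkl, hka, rfl⟩)
      · exact ⟨l, hr, by simp⟩
      · exact ⟨k, hka, by simp [Function.update, hkl]⟩
  constructor
  · refine ⟨?_, ?_, ?_⟩
    · intro r
      by_cases hr : r ∈ T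
      · simp only [hf, if_pos hr]
        exact le_min (h1 r) (hmnn r hr)
      · simp only [hf, if_neg hr]; exact h1 r
    · intro r hr0
      have hrT : r ∉ T := fun h => by simp [(hT r h).1] at hr0
      simp only [hf, if_neg hrT]; exact h2 r hr0
    · refine le_trans (Finset.sum_le_sum ?_) h3
      intro r _
      by_cases hr : r ∈ T
      · simp only [hf, if_pos hr]; exact min_le_left _ _
      · simp only [hf, if_neg hr]; exact le_refl _
  · unfold payoff
    apply Finset.sum_congr rfl
    intro r hr
    rw [Finset.mem_filter] at hr
    have hal : a l r = true := hr.2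
    congr 1
    unfold linkMin
    rw [hset f r hal, hset s' r hal]
    by_cases hrT : r ∈ T
    · rw [csInf_insert (hCfin r).bddBelow (hCne r hrT),
        csInf_insert (hCfin r).bddBelow (hCne r hrT)]
      simp only [hf, if_pos hrT]
      rw [min_assoc, min_self]
    · simp only [hf, if_neg hrT]
end

section
/- Let S = (s_1,…,s_L) be a feasible strategy profile of the capacity allocation game such that: (i) the component s_1 maximizes the single-link objective Σ_r a_{1r} b_r u_r(s_{1r}) over all feasible strategies of link 1, and (ii) for every flow r with a_{1r} = 1 one has s_{1r} = min_{k : a_{kr}=1} s_{kr}. Then S maximizes player 1's payoff over ALL strategy profiles: Q_1(S') ≤ Q_1(S) for every feasible profile S'. Consequently, S is Pareto-optimal: there is no feasible profile S' ≠ S with Q_l(S') > Q_l(S) for every player l simultaneously. -/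
open Finset

/-- if link 1's strategy maximizes its single-link objective and all its
flows attain their path minimum at link 1, then link 1's payoff is maximal over all
feasible profiles; consequently the profile is Pareto-optimal. -/
theorem first_link_locally_optimal_implies_pareto
    {L R : ℕ} (hL : 0 < L) (a : Fin L → Fin R → Bool) (c : Fin L → ℝ)
    (b : Fin R → ℝ) (u : Fin R → ℝ → ℝ) (S : Fin L → Fin R → ℝ)
    (hc : ∀ l, 0 < c l)
    (hflow : ∀ r : Fin R, ∃ k, a k r = true)
    (hu : ∀ r, MonotoneOn (u r) (Set.Ici 0))
    (hb : ∀ r, 0 ≤ b r)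
    (hS : FeasibleProfile a c S)
    (hmax : ∀ t : Fin R → ℝ, FeasibleStrat a c ⟨0, hL⟩ t →
      (∑ r ∈ Finset.univ.filter (fun r => a ⟨0, hL⟩ r = true), b r * u r (t r)) ≤
      ∑ r ∈ Finset.univ.filter (fun r => a ⟨0, hL⟩ r = true), b r * u r (S ⟨0, hL⟩ r))
    (hmin : ∀ r : Fin R, a ⟨0, hL⟩ r = true → S ⟨0, hL⟩ r = linkMin a S r) :
    (∀ S' : Fin L → Fin R → ℝ, FeasibleProfile a c S' →
      payoff a b u ⟨0, hL⟩ S' ≤ payoff a b u ⟨0, hL⟩ S) ∧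
    ¬ ∃ S' : Fin L → Fin R → ℝ, FeasibleProfile a c S' ∧ S' ≠ S ∧
        ∀ l, payoff a b u l S < payoff a b u l S' := by
  have main : ∀ S' : Fin L → Fin R → ℝ, FeasibleProfile a c S' →
      payoff a b u ⟨0, hL⟩ S' ≤ payoff a b u ⟨0, hL⟩ S := by
    intro S' hS'
    -- basic facts about linkMin of S'
    have hne : ∀ r : Fin R, ({v : ℝ | ∃ k, a k r = true ∧ v = S' k r}).Nonempty := by
      intro r
      obtain ⟨k, hk⟩ := hflow r
      exact ⟨S' k r, k, hk, rfl⟩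
    have hbdd : ∀ r : Fin R, BddBelow {v : ℝ | ∃ k, a k r = true ∧ v = S' k r} := by
      intro r
      refine ⟨0, ?_⟩
      rintro v ⟨k, _, rfl⟩
      exact (hS' k).1 r
    have hmin_nonneg : ∀ r : Fin R, 0 ≤ linkMin a S' r := by
      intro r
      apply le_csInf (hne r)
      rintro v ⟨k, _, rfl⟩
      exact (hS' k).1 r
    have hmin_le : ∀ r : Fin R, ∀ k, a k r = true → linkMin a S' r ≤ S' k r := by
      intro r k hk
      exact csInf_le (hbdd r) ⟨k, hk, rfl⟩
    -- candidate strategy for link 1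
    set t : Fin R → ℝ := fun r => if a ⟨0, hL⟩ r = true then linkMin a S' r else 0 with ht
    have hfeas : FeasibleStrat a c ⟨0, hL⟩ t := by
      refine ⟨fun r => ?_, fun r hr => ?_, ?_⟩
      · by_cases h : a ⟨0, hL⟩ r = true
        · simp [ht, h, hmin_nonneg r]
        · simp [ht, h]
      · simp [ht, hr]
      · calc (∑ r ∈ Finset.univ.filter (fun r => a ⟨0, hL⟩ r = true), t r)
            ≤ ∑ r ∈ Finset.univ.filter (fun r => a ⟨0, hL⟩ r = true), S' ⟨0, hL⟩ r := by
              apply Finset.sum_le_sum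
              intro r hr
              simp only [Finset.mem_filter] at hr
              simp [ht, hr.2, hmin_le r ⟨0, hL⟩ hr.2]
          _ ≤ c ⟨0, hL⟩ := (hS' ⟨0, hL⟩).2.2
    have h1 : payoff a b u ⟨0, hL⟩ S' =
        ∑ r ∈ Finset.univ.filter (fun r => a ⟨0, hL⟩ r = true), b r * u r (t r) := by
      apply Finset.sum_congr rfl
      intro r hr
      simp only [Finset.mem_filter] at hr
      simp [ht, hr.2]
    have h2 : payoff a b u ⟨0, hL⟩ S =
        ∑ r ∈ Finset.univ.filter (fun r => a ⟨0, hL⟩ r = true), b r * u r (S ⟨0, hL⟩ r) := by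
      apply Finset.sum_congr rfl
      intro r hr
      simp only [Finset.mem_filter] at hr
      rw [hmin r hr.2]
    rw [h1, h2]
    exact hmax t hfeas
  refine ⟨main, ?_⟩
  rintro ⟨S', hS', _, hall⟩
  exact absurd (main S' hS') (not_le.mpr (hall ⟨0, hL⟩))
end

section
/- Fix a link l with capacity c_l > 0, a 0-1 row (a_{l1},…,a_{lR}) of the routing matrix with at least one nonzero entry, weights b_r > 0 and w_r > 0, and parameter 0 < γ < 1, and let u_r(x) = w_r x^{1-γ}/(1-γ). Then the unique maximizer of Σ_{r=1}^R a_{lr} b_r u_r(s_{lr}) over the set D_l = {s_l ∈ ℝ^R : s_{lr} ≥ 0 for all r, s_{lr} = 0 whenever a_{lr} = 0, Σ_{r} a_{lr} s_{lr} ≤ c_l} is given in closed form by s_{lr} = a_{lr} · c_l · (b_r w_r)^{1/γ} / Σ_{j=1}^R a_{lj} (b_j w_j)^{1/γ}. In particular, the optimal allocations of flows on a link are proportional to the quantities v_r = (b_r w_r)^{1/γ}. -/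
open Finset Real

lemma tangent_lt {p x y : ℝ} (hp0 : 0 < p) (hp1 : p < 1) (hx : 0 ≤ x) (hy : 0 < y)
    (hxy : x ≠ y) : x ^ p < y ^ p + p * (y ^ (p - 1) * (x - y)) := by
  have hz : (-1 : ℝ) ≤ x / y - 1 := by
    have : 0 ≤ x / y := div_nonneg hx hy.le
    linarith
  have hz' : x / y - 1 ≠ 0 :=
    sub_ne_zero.mpr (fun h => hxy ((div_eq_one_iff_eq hy.ne').mp h))
  have h := rpow_one_add_lt_one_add_mul_self hz hz' hp0 hp1
  have h2 : (1 : ℝ) + (x / y - 1) = x / y := by ring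
  rw [h2] at h
  have hxyp : (x / y) ^ p = x ^ p / y ^ p := Real.div_rpow hx hy.le p
  have hyp : 0 < y ^ p := Real.rpow_pos_of_pos hy p
  have key := (mul_lt_mul_iff_right₀ hyp).mpr h
  rw [hxyp] at key
  have hyp1 : y ^ (p - 1) = y ^ p / y := by rw [Real.rpow_sub hy, Real.rpow_one]
  calc x ^ p = y ^ p * (x ^ p / y ^ p) := by field_simp
    _ < y ^ p * (1 + p * (x / y - 1)) := key
    _ = y ^ p + p * (y ^ (p - 1) * (x - y)) := by rw [hyp1]; field_simp

lemma tangent_le {p x y : ℝ} (hp0 : 0 < p) (hp1 : p < 1) (hx : 0 ≤ x) (hy : 0 < y) :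
    x ^ p ≤ y ^ p + p * (y ^ (p - 1) * (x - y)) := by
  by_cases hxy : x = y
  · subst hxy; simp
  · exact (tangent_lt hp0 hp1 hx hy hxy).le

/-- closed-form solution of the local one-step allocation problem on a
single link with isoelastic utilities: the unique maximizer allocates capacity
proportionally to `v_r = (b_r w_r)^(1/γ)`. -/
theorem single_link_closed_form_allocation
    {R : ℕ} (a : Fin R → Bool) (b w : Fin R → ℝ) (γ cl : ℝ)
    (u : Fin R → ℝ → ℝ) (s : Fin R → ℝ)
    (ha : ∃ r, a r = true)
    (hb : ∀ r, 0 < b r) (hw : ∀ r, 0 < w r)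
    (hγ0 : 0 < γ) (hγ1 : γ < 1) (hcl : 0 < cl)
    (hu : ∀ r x, u r x = w r * x ^ (1 - γ) / (1 - γ))
    (hs : ∀ r, s r = if a r = true then
        cl * (b r * w r) ^ (1 / γ) /
          (∑ j ∈ Finset.univ.filter (fun j => a j = true), (b j * w j) ^ (1 / γ))
      else 0) :
    -- s is feasible
    ((∀ r, 0 ≤ s r) ∧ (∀ r, a r = false → s r = 0) ∧
      (∑ r ∈ Finset.univ.filter (fun r => a r = true), s r) ≤ cl) ∧
    -- s maximizes the weighted utility objective over the feasible set
    (∀ t : Fin R → ℝ, (∀ r, 0 ≤ t r) → (∀ r, a r = false → t r = 0) →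
      (∑ r ∈ Finset.univ.filter (fun r => a r = true), t r) ≤ cl →
      (∑ r ∈ Finset.univ.filter (fun r => a r = true), b r * u r (t r)) ≤
        ∑ r ∈ Finset.univ.filter (fun r => a r = true), b r * u r (s r)) ∧
    -- and it is the unique maximizer
    (∀ t : Fin R → ℝ, (∀ r, 0 ≤ t r) → (∀ r, a r = false → t r = 0) →
      (∑ r ∈ Finset.univ.filter (fun r => a r = true), t r) ≤ cl →
      (∑ r ∈ Finset.univ.filter (fun r => a r = true), b r * u r (t r)) =
        (∑ r ∈ Finset.univ.filter (fun r => a r = true), b r * u r (s r)) →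
      t = s) := by
  set S : Finset (Fin R) := Finset.univ.filter (fun r => a r = true) with hS
  set p : ℝ := 1 - γ with hp
  have hp0 : 0 < p := by rw [hp]; linarith
  have hp1 : p < 1 := by rw [hp]; linarith
  set v : Fin R → ℝ := fun r => (b r * w r) ^ (1 / γ) with hv
  have hvpos : ∀ r, 0 < v r := fun r => Real.rpow_pos_of_pos (mul_pos (hb r) (hw r)) _
  set V : ℝ := ∑ j ∈ S, v j with hV
  obtain ⟨r0, hr0⟩ := ha
  have hr0S : r0 ∈ S := by simp [hS, hr0]
  have hVpos : 0 < V := Finset.sum_pos (fun i _ => hvpos i) ⟨r0, hr0S⟩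
  have hsS : ∀ r ∈ S, s r = cl * v r / V := by
    intro r hr
    have har : a r = true := by simpa [hS] using hr
    simp [hs r, har, hv, hV, hS]
  have hspos : ∀ r ∈ S, 0 < s r := by
    intro r hr
    rw [hsS r hr]
    exact div_pos (mul_pos hcl (hvpos r)) hVpos
  have hsum_s : ∑ r ∈ S, s r = cl := by
    rw [Finset.sum_congr rfl hsS]
    rw [← Finset.sum_div, ← Finset.mul_sum, ← hV, mul_div_assoc,
      div_self hVpos.ne', mul_one]
  set K : ℝ := (V / cl) ^ γ with hKdef
  have hKpos : 0 < K := Real.rpow_pos_of_pos (div_pos hVpos hcl) γ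
  have hbw : ∀ r, b r * w r = v r ^ γ := by
    intro r
    show b r * w r = ((b r * w r) ^ (1 / γ)) ^ γ
    rw [← Real.rpow_mul (mul_pos (hb r) (hw r)).le, one_div,
      inv_mul_cancel₀ hγ0.ne', Real.rpow_one]
  have hK : ∀ r ∈ S, b r * w r * s r ^ (p - 1) = K := by
    intro r hr
    have hclV : 0 < cl / V := div_pos hcl hVpos
    have h1 : s r = cl / V * v r := by rw [hsS r hr]; ring
    have h2 : s r ^ (p - 1) = (cl / V) ^ (-γ) * v r ^ (-γ) := by
      rw [h1, show p - 1 = -γ by rw [hp]; ring, Real.mul_rpow hclV.le (hvpos r).le]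
    have h4 : (cl / V) ^ (-γ) = K := by
      rw [hKdef, Real.rpow_neg hclV.le, ← Real.inv_rpow hclV.le, inv_div]
    calc b r * w r * s r ^ (p - 1)
        = v r ^ γ * ((cl / V) ^ (-γ) * v r ^ (-γ)) := by rw [hbw r, h2]
      _ = (cl / V) ^ (-γ) * (v r ^ γ * v r ^ (-γ)) := by ring
      _ = (cl / V) ^ (-γ) := by rw [← Real.rpow_add (hvpos r)]; simp
      _ = K := h4
  have hpoint_le : ∀ t : Fin R → ℝ, (∀ r, 0 ≤ t r) → ∀ r ∈ S,
      b r * w r * t r ^ p ≤ b r * w r * s r ^ p + p * K * (t r - s r) := by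
    intro t ht r hr
    have h := tangent_le hp0 hp1 (ht r) (hspos r hr) (x := t r) (y := s r)
    have hbw' : 0 < b r * w r := mul_pos (hb r) (hw r)
    calc b r * w r * t r ^ p
        ≤ b r * w r * (s r ^ p + p * (s r ^ (p - 1) * (t r - s r))) :=
          mul_le_mul_of_nonneg_left h hbw'.le
      _ = b r * w r * s r ^ p + p * (b r * w r * s r ^ (p - 1)) * (t r - s r) := by ring
      _ = b r * w r * s r ^ p + p * K * (t r - s r) := by rw [hK r hr]
  have hpoint_lt : ∀ t : Fin R → ℝ, (∀ r, 0 ≤ t r) → ∀ r ∈ S, t r ≠ s r →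
      b r * w r * t r ^ p < b r * w r * s r ^ p + p * K * (t r - s r) := by
    intro t ht r hr hne
    have h := tangent_lt hp0 hp1 (ht r) (hspos r hr) hne
    have hbw' : 0 < b r * w r := mul_pos (hb r) (hw r)
    calc b r * w r * t r ^ p
        < b r * w r * (s r ^ p + p * (s r ^ (p - 1) * (t r - s r))) :=
          (mul_lt_mul_iff_right₀ hbw').mpr h
      _ = b r * w r * s r ^ p + p * (b r * w r * s r ^ (p - 1)) * (t r - s r) := by ring
      _ = b r * w r * s r ^ p + p * K * (t r - s r) := by rw [hK r hr]
  have hlin : ∀ t : Fin R → ℝ,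
      ∑ r ∈ S, (b r * w r * s r ^ p + p * K * (t r - s r)) =
        (∑ r ∈ S, b r * w r * s r ^ p) + p * K * ((∑ r ∈ S, t r) - cl) := by
    intro t
    rw [Finset.sum_add_distrib]
    congr 1
    rw [← Finset.mul_sum, Finset.sum_sub_distrib, hsum_s]
  have hobj : ∀ x : Fin R → ℝ,
      ∑ r ∈ S, b r * u r (x r) = (∑ r ∈ S, b r * w r * x r ^ p) / p := by
    intro x
    rw [Finset.sum_div]
    refine Finset.sum_congr rfl fun r _ => ?_
    rw [hu r (x r)]
    ring
  have hmax : ∀ t : Fin R → ℝ, (∀ r, 0 ≤ t r) → (∑ r ∈ S, t r) ≤ cl →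
      ∑ r ∈ S, b r * w r * t r ^ p ≤ ∑ r ∈ S, b r * w r * s r ^ p := by
    intro t ht htc
    calc ∑ r ∈ S, b r * w r * t r ^ p
        ≤ ∑ r ∈ S, (b r * w r * s r ^ p + p * K * (t r - s r)) :=
          Finset.sum_le_sum (hpoint_le t ht)
      _ = (∑ r ∈ S, b r * w r * s r ^ p) + p * K * ((∑ r ∈ S, t r) - cl) := hlin t
      _ ≤ ∑ r ∈ S, b r * w r * s r ^ p := by nlinarith [mul_pos hp0 hKpos]
  refine ⟨⟨?_, ?_, ?_⟩, ?_, ?_⟩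
  · intro r
    rw [hs r]
    split
    · exact (div_pos (mul_pos hcl (hvpos r)) hVpos).le
    · exact le_refl 0
  · intro r hr
    rw [hs r]
    simp [hr]
  · exact le_of_eq hsum_s
  · intro t ht ht0 htc
    rw [hobj t, hobj s]
    exact div_le_div_of_nonneg_right (hmax t ht htc) hp0.le
  · intro t ht ht0 htc heq
    rw [hobj t, hobj s] at heq
    have heq' : ∑ r ∈ S, b r * w r * t r ^ p = ∑ r ∈ S, b r * w r * s r ^ p := by
      field_simp [hp0.ne'] at heq
      exact heq
    funext r
    by_cases hr : a r = true
    · by_contra hne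
      have hrS : r ∈ S := by simp [hS, hr]
      have hstrict : ∑ r ∈ S, b r * w r * t r ^ p <
          ∑ r ∈ S, (b r * w r * s r ^ p + p * K * (t r - s r)) :=
        Finset.sum_lt_sum (hpoint_le t ht) ⟨r, hrS, hpoint_lt t ht r hrS hne⟩
      rw [hlin t] at hstrict
      nlinarith [mul_pos hp0 hKpos]
    · have h1 : t r = 0 := ht0 r (by simpa using hr)
      have h2 : s r = 0 := by rw [hs r]; simp [hr]
      rw [h1, h2]
end

section
/- Consider the serial network: L ≥ 2 links of equal capacity C > 0 connected serially, with L + 1 flows, where for l = 1,…,L flow l is local to link l (a_{ll} = 1 and a_{kl} = 0 for k ≠ l) and flow L+1 passes through all L links (a_{l,L+1} = 1 for all l). Utilities are isoelastic, u_r(x) = w_r x^{1-γ}/(1-γ) with w_r > 0 and 0 < γ < 1. Then, for any weights b_r ≥ 0, the strategy profile in which each link l allocates its entire capacity to its local flow and nothing to the long flow (s_{ll} = C, s_{l,L+1} = 0, all other entries 0) is a pure Nash equilibrium of the capacity allocation game. -/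
open Finset

/-- in the serial network (L ≥ 2 links of equal capacity C, one local flow
per link and one long flow through all links), the profile in which each link gives all
its capacity to its local flow and nothing to the long flow is a pure Nash equilibrium,
for isoelastic utilities and any nonnegative weights. -/
theorem serial_network_local_profile_is_nash
    (L : ℕ) (hL : 2 ≤ L) (C γ : ℝ) (w b : Fin (L + 1) → ℝ)
    (u : Fin (L + 1) → ℝ → ℝ)
    (a : Fin L → Fin (L + 1) → Bool) (S : Fin L → Fin (L + 1) → ℝ)
    (hC : 0 < C)
    (hw : ∀ r, 0 < w r) (hb : ∀ r, 0 ≤ b r)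
    (hγ0 : 0 < γ) (hγ1 : γ < 1)
    (hu : ∀ r x, u r x = w r * x ^ (1 - γ) / (1 - γ))
    -- flow l (l < L) is local to link l; flow L passes through every link
    (ha : ∀ l r, a l r = (decide ((r : ℕ) = (l : ℕ)) || decide ((r : ℕ) = L)))
    -- each link allocates all of its capacity to its local flow, none to the long flow
    (hS : ∀ l r, S l r = if (r : ℕ) = (l : ℕ) then C else 0) :
    NashEq a (fun _ => C) b u S := by
  intro l s' hs'
  obtain ⟨hs'0, hs'zero, hs'sum⟩ := hs'
  have hlL : (l : ℕ) < L := l.isLt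
  set rl : Fin (L + 1) := ⟨l, by omega⟩ with hrl
  set rL : Fin (L + 1) := ⟨L, by omega⟩ with hrLdef
  have hne : rl ≠ rL := by
    simp only [rl, rL, ne_eq, Fin.mk.injEq]
    omega
  have hfilter : Finset.univ.filter (fun r => a l r = true) = {rl, rL} := by
    ext r
    simp only [Finset.mem_filter, Finset.mem_univ, true_and, ha,
      Bool.or_eq_true, decide_eq_true_eq, Finset.mem_insert,
      Finset.mem_singleton, Fin.ext_iff, rl, rL]
  set S' := Function.update S l s' with hS'
  -- minimum for the local flow under original profile
  have hmin1 : linkMin a S rl = C := by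
    have hset : {v : ℝ | ∃ k, a k rl = true ∧ v = S k rl} = {C} := by
      ext v
      simp only [Set.mem_setOf_eq, Set.mem_singleton_iff]
      constructor
      · rintro ⟨k, hk, rfl⟩
        rw [ha] at hk
        simp only [Bool.or_eq_true, decide_eq_true_eq] at hk
        have hkl : (k : ℕ) = (l : ℕ) := by
          rcases hk with h | h
          · exact h.symm
          · have := l.isLt; simp only [rl, rL, Fin.val_mk] at h; omega
        rw [hS]
        simp [rl, hkl]
      · rintro rfl
        exact ⟨l, by simp [ha, rl], by rw [hS]; simp [rl]⟩
    rw [linkMin, hset, csInf_singleton]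
  -- minimum for the long flow under original profile
  have hmin2 : linkMin a S rL = 0 := by
    have hset : {v : ℝ | ∃ k, a k rL = true ∧ v = S k rL} = {0} := by
      ext v
      simp only [Set.mem_setOf_eq, Set.mem_singleton_iff]
      constructor
      · rintro ⟨k, hk, rfl⟩
        rw [hS]
        have : ¬ ((rL : ℕ) = (k : ℕ)) := by
          have := k.isLt; simp only [rL]; omega
        simp [this]
      · rintro rfl
        refine ⟨l, by simp [ha, rL], ?_⟩
        rw [hS]
        have : ¬ ((rL : ℕ) = (l : ℕ)) := by simp only [rL]; omega
        simp [this]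
    rw [linkMin, hset, csInf_singleton]
  -- minimum for the local flow under deviation
  have hmin1' : linkMin a S' rl = s' rl := by
    have hset : {v : ℝ | ∃ k, a k rl = true ∧ v = S' k rl} = {s' rl} := by
      ext v
      simp only [Set.mem_setOf_eq, Set.mem_singleton_iff]
      constructor
      · rintro ⟨k, hk, rfl⟩
        rw [ha] at hk
        simp only [Bool.or_eq_true, decide_eq_true_eq] at hk
        have hkl : k = l := by
          rcases hk with h | h
          · exact Fin.ext (by simpa [rl] using h.symm)
          · have : (rl : ℕ) = (l : ℕ) := rfl
            omega
        subst hkl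
        simp [S', Function.update_self]
      · rintro rfl
        exact ⟨l, by simp [ha, rl], by simp [S', Function.update_self]⟩
    rw [linkMin, hset, csInf_singleton]
  -- minimum for the long flow under deviation is 0
  have hmin2' : linkMin a S' rL = 0 := by
    -- pick another link k ≠ l
    obtain ⟨k, hkne⟩ : ∃ k : Fin L, k ≠ l := by
      rcases Nat.lt_or_ge 0 (l : ℕ) with h | h
      · exact ⟨⟨0, by omega⟩, by simp [Fin.ext_iff]; omega⟩
      · exact ⟨⟨1, by omega⟩, by simp [Fin.ext_iff]; omega⟩
    have hmem : (0 : ℝ) ∈ {v : ℝ | ∃ k, a k rL = true ∧ v = S' k rL} := by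
      refine ⟨k, by simp [ha, rL], ?_⟩
      rw [hS', Function.update_of_ne hkne, hS]
      have : ¬ ((rL : ℕ) = (k : ℕ)) := by
        have := k.isLt; simp only [rL]; omega
      simp [this]
    have hlb : ∀ v ∈ {v : ℝ | ∃ k, a k rL = true ∧ v = S' k rL}, (0 : ℝ) ≤ v := by
      rintro v ⟨k', hk', rfl⟩
      by_cases hkl : k' = l
      · subst hkl; simp only [S', Function.update_self]; exact hs'0 rL
      · rw [hS', Function.update_of_ne hkl, hS]
        split <;> [exact hC.le; exact le_refl 0]
    refine le_antisymm (csInf_le ⟨0, hlb⟩ hmem) (le_csInf ⟨0, hmem⟩ hlb)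
  -- s' rl ≤ C
  have hsle : s' rl ≤ C := by
    have : s' rl + s' rL ≤ C := by
      have := hs'sum
      rwa [hfilter, Finset.sum_pair hne] at this
    have := hs'0 rL
    linarith
  -- compare payoffs
  have h1γ : (0 : ℝ) < 1 - γ := by linarith
  have hu0 : u rL 0 = 0 := by
    rw [hu, Real.zero_rpow (by linarith)]
    ring
  have hule : u rl (s' rl) ≤ u rl C := by
    rw [hu, hu]
    have hrpow : (s' rl) ^ (1 - γ) ≤ C ^ (1 - γ) :=
      Real.rpow_le_rpow (hs'0 rl) hsle h1γ.le
    have := hw rl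
    gcongr
  rw [payoff, payoff, hfilter, Finset.sum_pair hne, Finset.sum_pair hne,
    hmin1, hmin2, hmin1', hmin2']
  simp only [hu0, mul_zero, add_zero]
  exact mul_le_mul_of_nonneg_left hule (hb rl)
end

section
/- Consider the serial network: L ≥ 2 links of equal capacity C > 0 connected serially, with L + 1 flows, where for l = 1,…,L flow l is local to link l and flow L+1 passes through all L links. Utilities are isoelastic, u_r(x) = w_r x^{1-γ}/(1-γ) with w_r > 0 and 0 < γ < 1. Let W = Σ_{l=1}^L w_l and χ = w_{L+1}/W. Then the optimal value of the NUM problem (maximize Σ_{r=1}^{L+1} u_r(x_r) subject to x_l + x_{L+1} ≤ C for each link l and x ≥ 0) equals W·C^{1-γ}·(1 + χ^{1/γ})^γ/(1−γ), attained at x_{L+1} = C·χ^{1/γ}/(1 + χ^{1/γ}) and x_l = C/(1 + χ^{1/γ}) for l ≤ L. Consequently, the ratio of the optimal social welfare to the social welfare W·C^{1-γ}/(1−γ) of the profile in which each link allocates all its capacity to its local flow and zero to the long flow equals ((w_{L+1}/W)^{1/γ} + 1)^γ. -/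
open Finset

lemma rpow_tangent_le (p a b : ℝ) (hp0 : 0 < p) (hp1 : p < 1)
    (ha : 0 ≤ a) (hb : 0 < b) :
    a ^ p ≤ p * b ^ (p - 1) * a + (1 - p) * b ^ p := by
  have h := Real.geom_mean_le_arith_mean2_weighted (w₁ := p) (w₂ := 1 - p)
    (p₁ := a) (p₂ := b) hp0.le (by linarith) ha hb.le (by ring)
  have hb1 : (0:ℝ) < b ^ (p - 1) := Real.rpow_pos_of_pos hb _
  have hbp : b * b ^ (p - 1) = b ^ p := by
    nth_rewrite 1 [← Real.rpow_one b]
    rw [← Real.rpow_add hb]; ring_nf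
  calc a ^ p = (a ^ p * b ^ (1 - p)) * b ^ (p - 1) := by
        rw [mul_assoc, ← Real.rpow_add hb]; norm_num
    _ ≤ (p * a + (1 - p) * b) * b ^ (p - 1) := mul_le_mul_of_nonneg_right h hb1.le
    _ = p * b ^ (p - 1) * a + (1 - p) * (b * b ^ (p - 1)) := by ring
    _ = p * b ^ (p - 1) * a + (1 - p) * b ^ p := by rw [hbp]

/-- optimal value of NUM for the serial network with isoelastic utilities:
it equals `W·C^(1-γ)·(1+χ^(1/γ))^γ/(1-γ)` (attained at the indicated point), and its
ratio to the welfare `W·C^(1-γ)/(1-γ)` of the all-local profile is `((w_{L+1}/W)^(1/γ)+1)^γ`. -/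
theorem serial_network_num_optimum_and_ratio
    (L : ℕ) (hL : 2 ≤ L) (C γ : ℝ) (w : Fin (L + 1) → ℝ)
    (u : Fin (L + 1) → ℝ → ℝ)
    (W χ : ℝ) (xhat : Fin (L + 1) → ℝ)
    (a : Fin L → Fin (L + 1) → Bool) (S : Fin L → Fin (L + 1) → ℝ)
    (hC : 0 < C) (hw : ∀ r, 0 < w r) (hγ0 : 0 < γ) (hγ1 : γ < 1)
    (hu : ∀ r x, u r x = w r * x ^ (1 - γ) / (1 - γ))
    (hW : W = ∑ l : Fin L, w (Fin.castSucc l))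
    (hχ : χ = w (Fin.last L) / W)
    (hxhat : ∀ r, xhat r = if r = Fin.last L then
        C * χ ^ (1 / γ) / (1 + χ ^ (1 / γ)) else C / (1 + χ ^ (1 / γ)))
    (ha : ∀ l r, a l r = (decide ((r : ℕ) = (l : ℕ)) || decide ((r : ℕ) = L)))
    (hS : ∀ l r, S l r = if (r : ℕ) = (l : ℕ) then C else 0) :
    -- the indicated point is feasible for NUM
    (∀ r, 0 ≤ xhat r) ∧
    (∀ l : Fin L, xhat (Fin.castSucc l) + xhat (Fin.last L) ≤ C) ∧
    -- it attains the claimed optimal value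
    (∑ r, u r (xhat r)) = W * C ^ (1 - γ) * (1 + χ ^ (1 / γ)) ^ γ / (1 - γ) ∧
    -- and no feasible point does better
    (∀ x : Fin (L + 1) → ℝ, (∀ r, 0 ≤ x r) →
      (∀ l : Fin L, x (Fin.castSucc l) + x (Fin.last L) ≤ C) →
      (∑ r, u r (x r)) ≤ W * C ^ (1 - γ) * (1 + χ ^ (1 / γ)) ^ γ / (1 - γ)) ∧
    -- the all-local profile has social welfare W·C^(1-γ)/(1-γ)
    welfare a u S = W * C ^ (1 - γ) / (1 - γ) ∧
    -- ratio of optimal welfare to the all-local profile's welfare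
    (W * C ^ (1 - γ) * (1 + χ ^ (1 / γ)) ^ γ / (1 - γ)) / (W * C ^ (1 - γ) / (1 - γ)) =
      ((w (Fin.last L) / W) ^ (1 / γ) + 1) ^ γ := by
  
  have hLpos : 0 < L := by omega
  have _inst : Nonempty (Fin L) := ⟨⟨0, hLpos⟩⟩
  have hp0 : (0:ℝ) < 1 - γ := by linarith
  have hpne : (1:ℝ) - γ ≠ 0 := ne_of_gt hp0
  have hγne : γ ≠ 0 := ne_of_gt hγ0
  have hWpos : 0 < W := by
    rw [hW]; exact Finset.sum_pos (fun i _ => hw _) Finset.univ_nonempty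
  have hχpos : 0 < χ := by rw [hχ]; exact div_pos (hw _) hWpos
  set t := χ ^ (1 / γ) with ht
  have htpos : 0 < t := Real.rpow_pos_of_pos hχpos _
  have hD : (0:ℝ) < 1 + t := by linarith
  have hDne : (1:ℝ) + t ≠ 0 := ne_of_gt hD
  have htγ : t ^ γ = χ := by
    rw [ht, ← Real.rpow_mul hχpos.le, one_div, inv_mul_cancel₀ hγne, Real.rpow_one]
  have hwL : w (Fin.last L) = χ * W := by
    rw [hχ]; field_simp
  have hχt : χ * t ^ (1 - γ) = t := by
    rw [← htγ, ← Real.rpow_add htpos]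
    norm_num
  have hχt' : χ * t ^ (1 - γ - 1) = 1 := by
    rw [← htγ, ← Real.rpow_add htpos]
    norm_num
  have hB1C : (C / (1 + t)) ^ (1 - γ - 1) * C = C ^ (1 - γ) * (1 + t) ^ γ := by
    rw [Real.div_rpow hC.le hD.le, div_mul_eq_mul_div,
      div_eq_iff (ne_of_gt (Real.rpow_pos_of_pos hD _)), mul_assoc,
      ← Real.rpow_add hD]
    have e0 : γ + (1 - γ - 1) = 0 := by ring
    rw [e0, Real.rpow_zero, mul_one]
    nth_rewrite 2 [← Real.rpow_one C]
    rw [← Real.rpow_add hC]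
    ring_nf
  have hK1D : (C / (1 + t)) ^ (1 - γ) * (1 + t) = C ^ (1 - γ) * (1 + t) ^ γ := by
    rw [Real.div_rpow hC.le hD.le, div_mul_eq_mul_div,
      div_eq_iff (ne_of_gt (Real.rpow_pos_of_pos hD _)), mul_assoc,
      ← Real.rpow_add hD]
    have e0 : γ + (1 - γ) = 1 := by ring
    rw [e0, Real.rpow_one]
  have hB : w (Fin.last L) * (C * t / (1 + t)) ^ (1 - γ - 1)
      = W * (C / (1 + t)) ^ (1 - γ - 1) := by
    rw [show C * t / (1 + t) = C / (1 + t) * t by ring,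
      Real.mul_rpow (by positivity) htpos.le, hwL]
    linear_combination W * (C / (1 + t)) ^ (1 - γ - 1) * hχt'
  have hK : w (Fin.last L) * (C * t / (1 + t)) ^ (1 - γ)
      = W * (t * (C / (1 + t)) ^ (1 - γ)) := by
    rw [show C * t / (1 + t) = C / (1 + t) * t by ring,
      Real.mul_rpow (by positivity) htpos.le, hwL]
    linear_combination W * (C / (1 + t)) ^ (1 - γ) * hχt
  have hx1 : ∀ i : Fin L, xhat (Fin.castSucc i) = C / (1 + t) := fun i => by
    rw [hxhat, if_neg (Fin.castSucc_lt_last i).ne]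
  have hx2 : xhat (Fin.last L) = C * t / (1 + t) := by rw [hxhat, if_pos rfl]
  refine ⟨?_, ?_, ?_, ?_, ?_, ?_⟩
  · -- nonnegativity
    intro r
    rw [hxhat]
    split_ifs <;> positivity
  · -- feasibility
    intro l
    rw [hx1 l, hx2, ← add_div,
      show C + C * t = C * (1 + t) by ring, mul_div_assoc, div_self hDne, mul_one]
  · -- value attained
    rw [Fin.sum_univ_castSucc]
    simp only [hu, hx1, hx2]
    rw [← Finset.sum_div, ← add_div, ← Finset.sum_mul, ← hW]
    congr 1
    rw [hK]
    linear_combination W * hK1D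
  · -- optimality
    intro x hx0 hxc
    simp only [hu]
    rw [← Finset.sum_div]
    gcongr
    rw [Fin.sum_univ_castSucc]
    have expand : ∀ A B : ℝ,
        ∑ i : Fin L, w (Fin.castSucc i) * (A * x (Fin.castSucc i) + B)
          = A * (∑ i : Fin L, w (Fin.castSucc i) * x (Fin.castSucc i)) + B * W := by
      intro A B
      rw [hW, Finset.mul_sum, Finset.mul_sum, ← Finset.sum_add_distrib]
      exact Finset.sum_congr rfl fun i _ => by ring
    have hA1 : (0:ℝ) < C / (1 + t) := by positivity
    have hA2 : (0:ℝ) < C * t / (1 + t) := by positivity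
    calc (∑ i : Fin L, w (Fin.castSucc i) * x (Fin.castSucc i) ^ (1 - γ))
          + w (Fin.last L) * x (Fin.last L) ^ (1 - γ)
        ≤ (∑ i : Fin L, w (Fin.castSucc i) *
              ((1 - γ) * (C / (1 + t)) ^ (1 - γ - 1) * x (Fin.castSucc i)
                + (1 - (1 - γ)) * (C / (1 + t)) ^ (1 - γ)))
            + w (Fin.last L) *
              ((1 - γ) * (C * t / (1 + t)) ^ (1 - γ - 1) * x (Fin.last L)
                + (1 - (1 - γ)) * (C * t / (1 + t)) ^ (1 - γ)) := by
          refine add_le_add (Finset.sum_le_sum fun i _ => ?_) ?_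
          · exact mul_le_mul_of_nonneg_left
              (rpow_tangent_le _ _ _ hp0 (by linarith) (hx0 _) hA1) (hw _).le
          · exact mul_le_mul_of_nonneg_left
              (rpow_tangent_le _ _ _ hp0 (by linarith) (hx0 _) hA2) (hw _).le
      _ = (1 - γ) * (C / (1 + t)) ^ (1 - γ - 1)
            * (∑ i : Fin L, w (Fin.castSucc i) * x (Fin.castSucc i))
          + (1 - (1 - γ)) * (C / (1 + t)) ^ (1 - γ) * W
          + w (Fin.last L) *
              ((1 - γ) * (C * t / (1 + t)) ^ (1 - γ - 1) * x (Fin.last L)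
                + (1 - (1 - γ)) * (C * t / (1 + t)) ^ (1 - γ)) := by
          rw [expand]
      _ ≤ (1 - γ) * (C / (1 + t)) ^ (1 - γ - 1) * (W * (C - x (Fin.last L)))
          + (1 - (1 - γ)) * (C / (1 + t)) ^ (1 - γ) * W
          + w (Fin.last L) *
              ((1 - γ) * (C * t / (1 + t)) ^ (1 - γ - 1) * x (Fin.last L)
                + (1 - (1 - γ)) * (C * t / (1 + t)) ^ (1 - γ)) := by
          have hsum : (∑ i : Fin L, w (Fin.castSucc i) * x (Fin.castSucc i))
              ≤ W * (C - x (Fin.last L)) := by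
            rw [hW, Finset.sum_mul]
            refine Finset.sum_le_sum fun i _ => ?_
            have := hxc i
            exact mul_le_mul_of_nonneg_left (by linarith) (hw _).le
          have hnn : (0:ℝ) ≤ (1 - γ) * (C / (1 + t)) ^ (1 - γ - 1) := by positivity
          exact add_le_add_left (add_le_add_left
            (mul_le_mul_of_nonneg_left hsum hnn) _) _
      _ = W * C ^ (1 - γ) * (1 + t) ^ γ := by
          linear_combination ((1 - γ) * x (Fin.last L)) * hB + (1 - (1 - γ)) * hK
            + ((1 - γ) * W) * hB1C + ((1 - (1 - γ)) * W) * hK1D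
  · -- welfare of all-local profile
    have hmin1 : ∀ l : Fin L, linkMin a S (Fin.castSucc l) = C := by
      intro l
      have hset : {v : ℝ | ∃ k, a k (Fin.castSucc l) = true ∧ v = S k (Fin.castSucc l)}
          = {C} := by
        ext v
        simp only [Set.mem_setOf_eq, Set.mem_singleton_iff]
        constructor
        · rintro ⟨k, hak, rfl⟩
          rw [ha] at hak
          simp only [Fin.coe_castSucc, Bool.or_eq_true, decide_eq_true_eq] at hak
          rcases hak with h | h
          · rw [hS]; simp [Fin.coe_castSucc, h]
          · exact absurd h (Nat.ne_of_lt l.isLt)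
        · rintro rfl
          exact ⟨l, by rw [ha]; simp, by rw [hS]; simp⟩
      simp only [linkMin, hset, csInf_singleton]
    have hmin2 : linkMin a S (Fin.last L) = 0 := by
      have hset : {v : ℝ | ∃ k, a k (Fin.last L) = true ∧ v = S k (Fin.last L)}
          = {0} := by
        ext v
        simp only [Set.mem_setOf_eq, Set.mem_singleton_iff]
        constructor
        · rintro ⟨k, hak, rfl⟩
          rw [hS]
          have hne : ((Fin.last L : Fin (L + 1)) : ℕ) ≠ (k : ℕ) := by
            simp only [Fin.val_last]
            exact (Nat.ne_of_lt k.isLt).symm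
          rw [if_neg hne]
        · rintro rfl
          refine ⟨⟨0, hLpos⟩, ?_, ?_⟩
          · rw [ha]; simp [Fin.val_last]
          · rw [hS]
            have hne : ((Fin.last L : Fin (L + 1)) : ℕ) ≠ ((⟨0, hLpos⟩ : Fin L) : ℕ) := by
              simp only [Fin.val_last]
              omega
            rw [if_neg hne]
      simp only [linkMin, hset, csInf_singleton]
    unfold welfare
    rw [Fin.sum_univ_castSucc]
    simp only [hu, hmin1, hmin2]
    rw [Real.zero_rpow hpne]
    simp only [mul_zero, zero_div, add_zero]
    rw [← Finset.sum_div, ← Finset.sum_mul, ← hW]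
  · -- ratio
    rw [← hχ, ← ht, add_comm t 1]
    have hXne : W * C ^ (1 - γ) ≠ 0 := by positivity
    field_simp
end
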